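/- arXiv:1202.3570 — 6 statements merged into one kernel-verified Lean document; each statement's English description precedes it below -/
import Mathlib

section
/- Consider two independent normal populations with means μ_0 ≤ μ_1 and common variance σ² > 0, where for each s the sample from population 0 has fixed size n_0 = m and the sample from population 1 has size n_1^{(s)} = m′s (m, m′ ≥ 1 fixed integers). Then as s → ∞ the constrained MLE of the variance converges almost surely to the true variance: σ̂²_{(s)} → σ² a.s. -/
open MeasureTheory ProbabilityTheory Filter Finset BoundedContinuousFunction
open scoped NNReal Topology

noncomputable section


/-- The sample mean of the first `n` observations of the sequence `x`. -/
def sampleMean (x : ℕ → ℝ) (n : ℕ) : ℝ := (∑ j ∈ Finset.range n, x j) / n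

/-- Tree-order MLE of `μ₀` in the two-population case: control sample size `m`,
treatment sample size `ms`; here `xb0`, `xb1` are the two sample means.
`μ̂₀ = min (X̄₀, (m X̄₀ + ms X̄₁)/(m + ms))`. -/
def twoMLE0 (m ms : ℕ) (xb0 xb1 : ℝ) : ℝ :=
  min xb0 (((m : ℝ) * xb0 + (ms : ℝ) * xb1) / ((m + ms : ℕ) : ℝ))

/-- Tree-order MLE of `μ₁` in the two-population case: `μ̂₁ = max (μ̂₀, X̄₁)`. -/
def twoMLE1 (m ms : ℕ) (xb0 xb1 : ℝ) : ℝ := max (twoMLE0 m ms xb0 xb1) xb1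

/-- Tree-order MLE of the common variance `σ²` in the two-population case, based on the
first `m` observations of `X0` and the first `ms` observations of `X1`. -/
def twoSigmaHat (m ms : ℕ) (X0 X1 : ℕ → ℝ) : ℝ :=
  (∑ j ∈ Finset.range m, (X0 j - twoMLE0 m ms (sampleMean X0 m) (sampleMean X1 ms)) ^ 2
   + ∑ j ∈ Finset.range ms, (X1 j - twoMLE1 m ms (sampleMean X0 m) (sampleMean X1 ms)) ^ 2)
   / ((m + ms : ℕ) : ℝ)


open Real


lemma myInt2 {b : ℝ} (hb : 0 < b) :
    Integrable (fun x : ℝ => x ^ 2 * rexp (-b * x ^ 2)) := by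
  have h := integrable_rpow_mul_exp_neg_mul_sq hb (s := 2) (by norm_num)
  refine h.congr (Eventually.of_forall fun x => ?_)
  simp only [show (2 : ℝ) = ((2 : ℕ) : ℝ) by norm_num, Real.rpow_natCast]

lemma myIntOdd {b : ℝ} (hb : 0 < b) :
    ∫ x : ℝ, x * rexp (-b * x ^ 2) = 0 := by
  have h := MeasureTheory.integral_neg_eq_self (fun x : ℝ => x * rexp (-b * x ^ 2))
  have h2 : ∫ x : ℝ, (-x) * rexp (-b * (-x) ^ 2)
      = - ∫ x : ℝ, x * rexp (-b * x ^ 2) := by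
    rw [← integral_neg]; congr 1; ext x; ring_nf
  have h3 := h volume
  rw [h2] at h3
  linarith

lemma myDeriv {b : ℝ} (x : ℝ) :
    HasDerivAt (fun y : ℝ => y * rexp (-b * y ^ 2))
      (rexp (-b * x ^ 2) - 2 * b * (x ^ 2 * rexp (-b * x ^ 2))) x := by
  have h1 : HasDerivAt (fun y : ℝ => -b * y ^ 2) (-b * (2 * x)) x := by
    simpa using ((hasDerivAt_pow 2 x).const_mul (-b))
  have h3 := (hasDerivAt_id' (x := x)).mul h1.exp
  refine h3.congr_deriv ?_
  ring

lemma myTendstoTop {b : ℝ} (hb : 0 < b) :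
    Tendsto (fun x : ℝ => x * rexp (-b * x ^ 2)) atTop (𝓝 0) := by
  have hb2 : Tendsto (fun x : ℝ => rexp (-(1/2) * x)) atTop (𝓝 0) := by
    have h1 : Tendsto (fun x : ℝ => -((1/2 : ℝ) * x)) atTop atBot :=
      tendsto_neg_atTop_atBot.comp (tendsto_id.const_mul_atTop (by norm_num))
    have := Real.tendsto_exp_atBot.comp h1
    refine this.congr fun x => by simp [Function.comp]
  have h := (rpow_mul_exp_neg_mul_sq_isLittleO_exp_neg hb 1).isBigO.trans_tendsto hb2
  refine h.congr' ?_
  filter_upwards [eventually_ge_atTop (0 : ℝ)] with x hx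
  rw [Real.rpow_one]

lemma myIntSq {b : ℝ} (hb : 0 < b) :
    ∫ x : ℝ, x ^ 2 * rexp (-b * x ^ 2) = √(π / b) / (2 * b) := by
  set f' : ℝ → ℝ := fun x => rexp (-b * x ^ 2) - 2 * b * (x ^ 2 * rexp (-b * x ^ 2)) with hf'
  have hint : Integrable f' :=
    (integrable_exp_neg_mul_sq hb).sub ((myInt2 hb).const_mul (2 * b))
  have hIoi : ∫ x in Set.Ioi (0:ℝ), f' x = 0 := by
    have h := integral_Ioi_of_hasDerivAt_of_tendsto' (f := fun y : ℝ => y * rexp (-b * y ^ 2))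
      (f' := f') (a := 0) (m := 0) (fun x _ => myDeriv x) hint.integrableOn (myTendstoTop hb)
    rw [h]; norm_num
  have hIic : ∫ x in Set.Iic (0:ℝ), f' x = 0 := by
    have h := integral_comp_neg_Ioi (c := (0:ℝ)) f'
    rw [neg_zero] at h
    rw [← h]
    rw [show (fun x => f' (-x)) = f' by ext x; simp only [hf']; ring_nf]
    exact hIoi
  have htot : ∫ x : ℝ, f' x = 0 := by
    rw [← intervalIntegral.integral_Iic_add_Ioi (b := (0:ℝ)) hint.integrableOn hint.integrableOn, hIic, hIoi]
    ring
  have hsub : ∫ x : ℝ, f' x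
      = √(π / b) - 2 * b * ∫ x : ℝ, x ^ 2 * rexp (-b * x ^ 2) := by
    rw [hf', integral_sub (integrable_exp_neg_mul_sq hb) ((myInt2 hb).const_mul (2*b)),
      integral_gaussian, MeasureTheory.integral_const_mul]
  rw [htot] at hsub
  have h2b : (2 : ℝ) * b ≠ 0 := by positivity
  field_simp at hsub ⊢
  linarith

open ProbabilityTheory
open scoped NNReal ENNReal

lemma myPdfShift {v : ℝ≥0} (μ x : ℝ) :
    gaussianPDFReal μ v x = gaussianPDFReal 0 v (x - μ) := by
  simp [gaussianPDFReal]

lemma myPdf0 {v : ℝ≥0} (x : ℝ) :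
    gaussianPDFReal 0 v x
      = (√(2 * π * (v:ℝ)))⁻¹ * rexp (-(2 * (v:ℝ))⁻¹ * x ^ 2) := by
  rw [gaussianPDFReal]
  congr 1
  rw [sub_zero, div_eq_mul_inv, neg_mul, neg_mul, mul_comm]

lemma myKeyConst {v : ℝ≥0} (hv : v ≠ 0) :
    (√(2 * π * (v:ℝ)))⁻¹ * √(π / (2 * (v:ℝ))⁻¹) = 1 := by
  have hvpos : (0:ℝ) < (v:ℝ) := by
    have := hv
    positivity
  have h1 : π / (2 * (v:ℝ))⁻¹ = 2 * π * (v:ℝ) := by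
    rw [div_eq_mul_inv, inv_inv]; ring
  rw [h1, inv_mul_cancel₀]
  exact Real.sqrt_ne_zero'.mpr (by positivity)

lemma myGaussRepr {v : ℝ≥0} (hv : v ≠ 0) (μ : ℝ) (f : ℝ → ℝ) :
    ∫ x, f x ∂(gaussianReal μ v) = ∫ x, f (x + μ) * gaussianPDFReal 0 v x := by
  rw [gaussianReal_of_var_ne_zero μ hv]
  have hd : gaussianPDF μ v
      = fun x => (((gaussianPDFReal μ v x).toNNReal : ℝ≥0) : ℝ≥0∞) := by
    ext x; simp only [gaussianPDF, ENNReal.ofReal]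
  rw [hd, integral_withDensity_eq_integral_smul
    ((measurable_gaussianPDFReal μ v).real_toNNReal) f]
  have heq : (fun x => (Real.toNNReal (gaussianPDFReal μ v x)) • f x)
      = fun x => (fun y => f y * gaussianPDFReal μ v y) x := by
    ext x
    rw [NNReal.smul_def, smul_eq_mul, Real.coe_toNNReal _ (gaussianPDFReal_nonneg μ v x),
      mul_comm]
  rw [heq, ← MeasureTheory.integral_add_right_eq_self
    (fun y => f y * gaussianPDFReal μ v y) μ]
  congr 1
  ext x
  rw [myPdfShift μ (x + μ), add_sub_cancel_right]

lemma myGaussIntegrable {v : ℝ≥0} (hv : v ≠ 0) (μ : ℝ) {f : ℝ → ℝ}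
    (h : Integrable (fun x => f (x + μ) * gaussianPDFReal 0 v x)) :
    Integrable f (gaussianReal μ v) := by
  rw [gaussianReal_of_var_ne_zero μ hv]
  rw [integrable_withDensity_iff (measurable_gaussianPDF μ v)
    (Eventually.of_forall fun x => ENNReal.ofReal_lt_top)]
  have h2 := h.comp_sub_right μ
  refine h2.congr (Eventually.of_forall fun x => ?_)
  simp only [gaussianPDF, ENNReal.toReal_ofReal (gaussianPDFReal_nonneg μ v x)]
  rw [myPdfShift μ x]
  simp

lemma myB_pos {v : ℝ≥0} (hv : v ≠ 0) : (0:ℝ) < (2 * (v:ℝ))⁻¹ := by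
  have hvpos : (0:ℝ) < (v:ℝ) := lt_of_le_of_ne (v.coe_nonneg) (by exact_mod_cast (Ne.symm hv))
  positivity

lemma myGaussIntegrableId {v : ℝ≥0} (hv : v ≠ 0) (μ : ℝ) :
    Integrable (fun x : ℝ => x) (gaussianReal μ v) := by
  apply myGaussIntegrable hv μ
  set b : ℝ := (2 * (v:ℝ))⁻¹ with hbdef
  have hb : (0:ℝ) < b := myB_pos hv
  set c : ℝ := (√(2 * π * (v:ℝ)))⁻¹ with hcdef
  have i1 : Integrable (fun x : ℝ => c * (x * rexp (-b * x ^ 2))) :=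
    (integrable_mul_exp_neg_mul_sq hb).const_mul c
  have i2 : Integrable (fun x : ℝ => (μ * c) * rexp (-b * x ^ 2)) :=
    (integrable_exp_neg_mul_sq hb).const_mul _
  refine (i1.add i2).congr (Eventually.of_forall fun x => ?_)
  show c * (x * rexp (-b * x ^ 2)) + (μ * c) * rexp (-b * x ^ 2)
      = (x + μ) * gaussianPDFReal 0 v x
  rw [myPdf0 x, ← hbdef, ← hcdef]
  ring

lemma myGaussIntegralId {v : ℝ≥0} (hv : v ≠ 0) (μ : ℝ) :
    ∫ x, x ∂(gaussianReal μ v) = μ := by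
  rw [myGaussRepr hv μ (fun x => x)]
  set b : ℝ := (2 * (v:ℝ))⁻¹ with hbdef
  have hb : (0:ℝ) < b := myB_pos hv
  set c : ℝ := (√(2 * π * (v:ℝ)))⁻¹ with hcdef
  have i1 : Integrable (fun x : ℝ => c * (x * rexp (-b * x ^ 2))) :=
    (integrable_mul_exp_neg_mul_sq hb).const_mul c
  have i2 : Integrable (fun x : ℝ => (μ * c) * rexp (-b * x ^ 2)) :=
    (integrable_exp_neg_mul_sq hb).const_mul _
  have heq : (fun x : ℝ => (x + μ) * gaussianPDFReal 0 v x)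
      = fun x : ℝ => c * (x * rexp (-b * x ^ 2)) + (μ * c) * rexp (-b * x ^ 2) := by
    ext x
    rw [myPdf0 x, ← hbdef, ← hcdef]
    ring
  rw [heq, integral_add i1 i2, MeasureTheory.integral_const_mul,
    MeasureTheory.integral_const_mul, myIntOdd hb, integral_gaussian]
  have hkey := myKeyConst hv
  rw [← hbdef, ← hcdef] at hkey
  rw [mul_zero, zero_add, mul_assoc, hkey, mul_one]

lemma myGaussIntegrableSq {v : ℝ≥0} (hv : v ≠ 0) (μ : ℝ) :
    Integrable (fun x : ℝ => (x - μ) ^ 2) (gaussianReal μ v) := by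
  apply myGaussIntegrable hv μ
  set b : ℝ := (2 * (v:ℝ))⁻¹ with hbdef
  have hb : (0:ℝ) < b := myB_pos hv
  set c : ℝ := (√(2 * π * (v:ℝ)))⁻¹ with hcdef
  refine ((myInt2 hb).const_mul c).congr (Eventually.of_forall fun x => ?_)
  show c * (x ^ 2 * rexp (-b * x ^ 2)) = (x + μ - μ) ^ 2 * gaussianPDFReal 0 v x
  rw [myPdf0 x, ← hbdef, ← hcdef]
  ring

lemma myGaussIntegralSq {v : ℝ≥0} (hv : v ≠ 0) (μ : ℝ) :
    ∫ x, (x - μ) ^ 2 ∂(gaussianReal μ v) = (v : ℝ) := by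
  rw [myGaussRepr hv μ (fun x => (x - μ) ^ 2)]
  set b : ℝ := (2 * (v:ℝ))⁻¹ with hbdef
  have hb : (0:ℝ) < b := myB_pos hv
  set c : ℝ := (√(2 * π * (v:ℝ)))⁻¹ with hcdef
  have heq : (fun x : ℝ => (x + μ - μ) ^ 2 * gaussianPDFReal 0 v x)
      = fun x : ℝ => c * (x ^ 2 * rexp (-b * x ^ 2)) := by
    ext x
    rw [myPdf0 x, ← hbdef, ← hcdef]
    ring
  rw [heq, MeasureTheory.integral_const_mul, myIntSq hb]
  have hkey := myKeyConst hv
  rw [← hbdef, ← hcdef] at hkey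
  have hvpos : (0:ℝ) < (v:ℝ) := lt_of_le_of_ne (v.coe_nonneg) (by exact_mod_cast (Ne.symm hv))
  have h2b : 2 * b = (v:ℝ)⁻¹ := by rw [hbdef]; field_simp
  rw [← mul_div_assoc, hkey, one_div, h2b, inv_inv]

lemma mySumSq (x : ℕ → ℝ) (n : ℕ) (t μ : ℝ) :
    ∑ j ∈ Finset.range n, (x j - t) ^ 2
      = ∑ j ∈ Finset.range n, (x j - μ) ^ 2
        + (μ - t) * (2 * (∑ j ∈ Finset.range n, x j) - n * (t + μ)) := by
  induction n with
  | zero => simp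
  | succ n ih =>
    rw [sum_range_succ, sum_range_succ (fun j => (x j - μ) ^ 2), sum_range_succ x, ih]
    push_cast
    ring

lemma myDet (m m' : ℕ) (hm : 1 ≤ m) (hm' : 1 ≤ m') (X0 X1 : ℕ → ℝ) (μ1 vr : ℝ)
    (hmean : Tendsto (fun n : ℕ => sampleMean X1 n) atTop (𝓝 μ1))
    (hsq : Tendsto (fun n : ℕ => (∑ j ∈ Finset.range n, (X1 j - μ1) ^ 2) / n)
      atTop (𝓝 vr)) :
    Tendsto (fun s : ℕ => twoSigmaHat m (m' * s) X0 X1) atTop (𝓝 vr) := by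
  -- notation
  set a : ℝ := sampleMean X0 m with ha
  set b : ℕ → ℝ := fun s => sampleMean X1 (m' * s) with hbdef
  set nn : ℕ → ℝ := fun s => ((m' * s : ℕ) : ℝ) with hnn
  set N : ℕ → ℝ := fun s => ((m + m' * s : ℕ) : ℝ) with hN
  have tn : Tendsto (fun s : ℕ => m' * s) atTop atTop :=
    tendsto_atTop_mono (fun s => Nat.le_mul_of_pos_left s (by omega)) tendsto_id
  have hb : Tendsto b atTop (𝓝 μ1) := hmean.comp tn
  have hNpos : ∀ s, (0:ℝ) < N s := fun s => by
    simp only [hN]; exact_mod_cast Nat.lt_of_lt_of_le (by omega) (le_refl (m + m' * s))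
  have hNtop : Tendsto N atTop atTop :=
    tendsto_natCast_atTop_atTop.comp
      (tendsto_atTop_mono (fun s => by
        have := Nat.le_mul_of_pos_left s (show 0 < m' by omega)
        simp only [id]; omega) tendsto_id)
  have hinvN : Tendsto (fun s => (N s)⁻¹) atTop (𝓝 0) :=
    tendsto_inv_atTop_zero.comp hNtop
  have hNeq : ∀ s, N s = (m:ℝ) + nn s := fun s => by
    simp only [hN, hnn]; push_cast; ring
  have hrat : Tendsto (fun s => nn s / N s) atTop (𝓝 1) := by
    have he : (fun s => nn s / N s) = fun s => 1 - (m:ℝ) * (N s)⁻¹ := by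
      ext s
      show nn s / N s = 1 - (m:ℝ) * (N s)⁻¹
      have h0 := (hNpos s).ne'
      field_simp
      rw [hNeq s]; ring
    rw [he]
    have h2 : Tendsto (fun s => 1 - (m:ℝ) * (N s)⁻¹) atTop (𝓝 (1 - (m:ℝ) * 0)) :=
      tendsto_const_nhds.sub (hinvN.const_mul (m:ℝ))
    simpa using h2
  -- weighted mean
  set w : ℕ → ℝ := fun s => ((m:ℝ) * a + nn s * b s) / N s with hwdef
  have hw : Tendsto w atTop (𝓝 μ1) := by
    have he : w = fun s => ((m:ℝ) * a) * (N s)⁻¹ + (nn s / N s) * b s := by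
      ext s
      show ((m:ℝ) * a + nn s * b s) / N s = ((m:ℝ) * a) * (N s)⁻¹ + (nn s / N s) * b s
      have h0 := (hNpos s).ne'
      field_simp
    rw [he]
    have h2 : Tendsto (fun s => ((m:ℝ) * a) * (N s)⁻¹ + (nn s / N s) * b s) atTop
        (𝓝 (((m:ℝ) * a) * 0 + 1 * μ1)) :=
      (hinvN.const_mul ((m:ℝ) * a)).add (hrat.mul hb)
    simpa using h2
  set t0 : ℕ → ℝ := fun s => twoMLE0 m (m' * s) a (b s) with ht0
  set t1 : ℕ → ℝ := fun s => twoMLE1 m (m' * s) a (b s) with ht1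
  have h0 : Tendsto t0 atTop (𝓝 (min a μ1)) := by
    have : t0 = fun s => min a (w s) := by ext s; rfl
    rw [this]
    exact tendsto_const_nhds.min hw
  have h1 : Tendsto t1 atTop (𝓝 μ1) := by
    have : t1 = fun s => max (t0 s) (b s) := by ext s; rfl
    rw [this]
    have := h0.max hb
    rwa [max_eq_right (min_le_right a μ1)] at this
  set A : ℕ → ℝ := fun s => ∑ j ∈ Finset.range m, (X0 j - t0 s) ^ 2 with hAdef
  have hA : Tendsto A atTop
      (𝓝 (∑ j ∈ Finset.range m, (X0 j - min a μ1) ^ 2)) :=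
    tendsto_finset_sum _ (fun j _ => (tendsto_const_nhds.sub h0).pow 2)
  set Q : ℕ → ℝ := fun s => ∑ j ∈ Finset.range (m' * s), (X1 j - μ1) ^ 2 with hQdef
  have hQ : Tendsto (fun s => Q s / nn s) atTop (𝓝 vr) := hsq.comp tn
  -- the limit expression
  set F : ℕ → ℝ := fun s => A s * (N s)⁻¹ + (Q s / nn s) * (nn s / N s)
      + (μ1 - t1 s) * ((nn s / N s) * (2 * b s - t1 s - μ1)) with hFdef
  have hF : Tendsto F atTop (𝓝 vr) := by
    have h2 : Tendsto (fun s => 2 * b s - t1 s - μ1) atTop (𝓝 (2 * μ1 - μ1 - μ1)) :=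
      ((hb.const_mul 2).sub h1).sub tendsto_const_nhds
    have h3 : Tendsto (fun s => μ1 - t1 s) atTop (𝓝 (μ1 - μ1)) :=
      tendsto_const_nhds.sub h1
    have := ((hA.mul hinvN).add (hQ.mul hrat)).add (h3.mul (hrat.mul h2))
    convert this using 2
    ring
  refine hF.congr' ?_
  filter_upwards [eventually_ge_atTop 1] with s hs
  have hms : 1 ≤ m' * s := Nat.one_le_iff_ne_zero.mpr (by positivity)
  have hn0 : nn s ≠ 0 := by
    simp only [hnn]; exact_mod_cast Nat.one_le_iff_ne_zero.mp hms
  have hN0 : N s ≠ 0 := (hNpos s).ne'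
  have hSb : ∑ j ∈ Finset.range (m' * s), X1 j = nn s * b s := by
    simp only [hbdef, sampleMean, hnn]
    field_simp
  show F s = twoSigmaHat m (m' * s) X0 X1
  rw [twoSigmaHat]
  have e1 : sampleMean X0 m = a := rfl
  have e2 : sampleMean X1 (m' * s) = b s := rfl
  rw [e1, e2]
  have e3 : twoMLE0 m (m' * s) a (b s) = t0 s := rfl
  have e4 : twoMLE1 m (m' * s) a (b s) = t1 s := rfl
  rw [e3, e4, mySumSq X1 (m' * s) (t1 s) μ1, hSb]
  have e5 : ∑ j ∈ Finset.range m, (X0 j - t0 s) ^ 2 = A s := rfl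
  have e6 : ∑ j ∈ Finset.range (m' * s), (X1 j - μ1) ^ 2 = Q s := rfl
  have e7 : ((m' * s : ℕ) : ℝ) = nn s := rfl
  have e8 : ((m + m' * s : ℕ) : ℝ) = N s := rfl
  rw [e5, e6, e7, e8, hFdef]
  field_simp
  ring

/-- Two independent normal populations with tree-ordered means
`μ0 ≤ μ1` and common variance `v > 0`.  At stage `s` the control sample has fixed size `m`
and the treatment sample has size `m' * s`.  Then the constrained MLE of the variance is
strongly consistent: `σ̂²_{(s)} → σ²` almost surely as `s → ∞`. -/
theorem variance_mle_strong_consistency_two_populations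
    {Ω : Type*} [MeasurableSpace Ω] (P : Measure Ω) [IsProbabilityMeasure P]
    (μ0 μ1 : ℝ) (hμ : μ0 ≤ μ1) (v : ℝ≥0) (hv : v ≠ 0)
    (m m' : ℕ) (hm : 1 ≤ m) (hm' : 1 ≤ m')
    (X0 X1 : ℕ → Ω → ℝ)
    (hmeas0 : ∀ j, Measurable (X0 j)) (hmeas1 : ∀ j, Measurable (X1 j))
    (hindep : iIndepFun (Sum.elim X0 X1) P)
    (hdist0 : ∀ j, Measure.map (X0 j) P = gaussianReal μ0 v)
    (hdist1 : ∀ j, Measure.map (X1 j) P = gaussianReal μ1 v) :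
    ∀ᵐ ω ∂P,
      Tendsto (fun s : ℕ => twoSigmaHat m (m' * s) (fun j => X0 j ω) (fun j => X1 j ω))
        atTop (𝓝 (v : ℝ)) := by

  -- Strong law for the sample means of population 1
  have pair1 : Pairwise (Function.onFun (ProbabilityTheory.IndepFun · · P) X1) := by
    intro i j hij
    exact hindep.indepFun (show (Sum.inr i : ℕ ⊕ ℕ) ≠ Sum.inr j by simpa using hij)
  have ident1 : ∀ i, ProbabilityTheory.IdentDistrib (X1 i) (X1 0) P P := fun i =>
    ⟨(hmeas1 i).aemeasurable, (hmeas1 0).aemeasurable, by rw [hdist1 i, hdist1 0]⟩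
  have int1 : Integrable (X1 0) P := by
    have h : Integrable (fun x : ℝ => x) (Measure.map (X1 0) P) := by
      rw [hdist1 0]; exact myGaussIntegrableId hv μ1
    have h2 := (integrable_map_measure measurable_id.aestronglyMeasurable
      (hmeas1 0).aemeasurable).mp h
    simpa [Function.comp] using h2
  have hE1 : (∫ ω, X1 0 ω ∂P) = μ1 := by
    have h := integral_map (μ := P) (hmeas1 0).aemeasurable
      (f := fun x : ℝ => x) measurable_id.aestronglyMeasurable
    rw [hdist1 0, myGaussIntegralId hv μ1] at h
    exact h.symm
  have slln1 := ProbabilityTheory.strong_law_ae_real X1 int1 pair1 ident1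
  rw [hE1] at slln1
  -- Strong law for the squared deviations
  set g : ℝ → ℝ := fun x => (x - μ1) ^ 2 with hgdef
  have hg : Measurable g := (measurable_id.sub_const μ1).pow_const 2
  set Y : ℕ → Ω → ℝ := fun j ω => (X1 j ω - μ1) ^ 2 with hYdef
  have hYg : ∀ j, Y j = g ∘ (X1 j) := fun j => rfl
  have pairY : Pairwise (Function.onFun (ProbabilityTheory.IndepFun · · P) Y) := by
    intro i j hij
    exact (pair1 hij).comp hg hg
  have identY : ∀ i, ProbabilityTheory.IdentDistrib (Y i) (Y 0) P P := fun i =>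
    (ident1 i).comp hg
  have intY : Integrable (Y 0) P := by
    have h : Integrable g (Measure.map (X1 0) P) := by
      rw [hdist1 0]; exact myGaussIntegrableSq hv μ1
    have h2 := (integrable_map_measure hg.aestronglyMeasurable
      (hmeas1 0).aemeasurable).mp h
    exact h2
  have hEY : (∫ ω, Y 0 ω ∂P) = (v : ℝ) := by
    have h := integral_map (μ := P) (hmeas1 0).aemeasurable
      (f := g) hg.aestronglyMeasurable
    rw [hdist1 0, myGaussIntegralSq hv μ1] at h
    exact h.symm
  have sllnY := ProbabilityTheory.strong_law_ae_real Y intY pairY identY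
  rw [hEY] at sllnY
  -- combine
  filter_upwards [slln1, sllnY] with ω h1 h2
  refine myDet m m' hm hm' (fun j => X0 j ω) (fun j => X1 j ω) μ1 (v : ℝ) ?_ ?_
  · exact h1
  · exact h2
end
end

section
/- Under assumptions A1–A4, if the total sample size N^{(s)} → ∞ as s → ∞, then with probability one 0 ≤ limsup_{s→∞} σ̂²_{(s)} ≤ σ². -/
open MeasureTheory ProbabilityTheory Filter Finset BoundedContinuousFunction
open scoped NNReal Topology

noncomputable section


/-- Vector of sample means: population `0` has sample size `n0`, every other population
has sample size `nn`.  `X i j` is the `j`-th observation from population `i`. -/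
def xbarVec (n0 nn : ℕ) (X : ℕ → ℕ → ℝ) (i : ℕ) : ℝ :=
  sampleMean (X i) (if i = 0 then n0 else nn)

/-- Tree-order restricted MLE of the control mean `μ₀`:
`μ̂₀ = min_{I ⊆ {1,…,s}} (n₀ X̄₀ + Σ_{i∈I} n X̄ᵢ) / (n₀ + n |I|)` (the minimum includes `I = ∅`). -/
def treeMLE0 (n0 nn s : ℕ) (xbar : ℕ → ℝ) : ℝ :=
  ((Finset.Icc 1 s).powerset).inf' (Finset.powerset_nonempty _)
    fun I => ((n0 : ℝ) * xbar 0 + ∑ i ∈ I, (nn : ℝ) * xbar i)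
      / ((n0 : ℝ) + (nn : ℝ) * I.card)

/-- Tree-order restricted MLE of the `i`-th treatment mean (`1 ≤ i ≤ s`):
`μ̂ᵢ = max (μ̂₀, X̄ᵢ)`. -/
def treeMLE (n0 nn s : ℕ) (xbar : ℕ → ℝ) (i : ℕ) : ℝ :=
  max (treeMLE0 n0 nn s xbar) (xbar i)

/-- Tree-order restricted MLE of the common variance `σ²`. -/
def sigmaHat (n0 nn s : ℕ) (X : ℕ → ℕ → ℝ) : ℝ :=
  (∑ j ∈ Finset.range n0, (X 0 j - treeMLE0 n0 nn s (xbarVec n0 nn X)) ^ 2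
    + ∑ i ∈ Finset.Icc 1 s, ∑ j ∈ Finset.range nn,
        (X i j - treeMLE n0 nn s (xbarVec n0 nn X) i) ^ 2)
    / ((n0 + s * nn : ℕ) : ℝ)

section Det

variable {n0 nn s : ℕ} {xbar : ℕ → ℝ}

/-- numerator of subset average -/
def numI (n0 nn : ℕ) (xbar : ℕ → ℝ) (I : Finset ℕ) : ℝ :=
  (n0 : ℝ) * xbar 0 + ∑ i ∈ I, (nn : ℝ) * xbar i

def denI (n0 nn : ℕ) (I : Finset ℕ) : ℝ := (n0 : ℝ) + (nn : ℝ) * I.card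

lemma denI_pos (h0 : 1 ≤ n0) (I : Finset ℕ) : 0 < denI n0 nn I := by
  have : (1:ℝ) ≤ (n0:ℝ) := by exact_mod_cast h0
  have : (0:ℝ) ≤ (nn:ℝ) * I.card := by positivity
  unfold denI; linarith

lemma treeMLE0_le (h0 : 1 ≤ n0) {I : Finset ℕ} (hI : I ⊆ Finset.Icc 1 s) :
    treeMLE0 n0 nn s xbar * denI n0 nn I ≤ numI n0 nn xbar I := by
  have h := Finset.inf'_le (f := fun I => numI n0 nn xbar I / denI n0 nn I)
    (b := I) (Finset.mem_powerset.2 hI)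
  have hd := denI_pos (nn := nn) h0 I
  calc treeMLE0 n0 nn s xbar * denI n0 nn I
      ≤ (numI n0 nn xbar I / denI n0 nn I) * denI n0 nn I := by
        apply mul_le_mul_of_nonneg_right _ hd.le
        exact h
    _ = numI n0 nn xbar I := by field_simp

/-- first-order condition at the tree MLE -/
lemma treeMLE0_foc (h0 : 1 ≤ n0) (nn s : ℕ) (xbar : ℕ → ℝ) :
    (n0 : ℝ) * (treeMLE0 n0 nn s xbar - xbar 0)
      + ∑ i ∈ Finset.Icc 1 s, (nn : ℝ) * max (treeMLE0 n0 nn s xbar - xbar i) 0 = 0 := by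
  set h := treeMLE0 n0 nn s xbar with hh
  obtain ⟨I₀, hI₀mem, hI₀⟩ := Finset.exists_mem_eq_inf' (s := (Finset.Icc 1 s).powerset)
    (Finset.powerset_nonempty _)
    (fun I => numI n0 nn xbar I / denI n0 nn I)
  rw [Finset.mem_powerset] at hI₀mem
  have hI₀eq : numI n0 nn xbar I₀ = h * denI n0 nn I₀ := by
    have hd := denI_pos (nn := nn) h0 I₀
    rw [hh]
    show numI n0 nn xbar I₀ = (treeMLE0 n0 nn s xbar) * denI n0 nn I₀
    unfold treeMLE0
    rw [show (((Finset.Icc 1 s).powerset).inf' (Finset.powerset_nonempty _)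
      fun I => ((n0 : ℝ) * xbar 0 + ∑ i ∈ I, (nn : ℝ) * xbar i)
        / ((n0 : ℝ) + (nn : ℝ) * I.card)) = numI n0 nn xbar I₀ / denI n0 nn I₀ from hI₀]
    field_simp
  set Istar := (Finset.Icc 1 s).filter (fun i => xbar i ≤ h) with hIstar
  have hIstarsub : Istar ⊆ Finset.Icc 1 s := Finset.filter_subset _ _
  set J := I₀ ∪ Istar with hJ
  have hJsub : J ⊆ Finset.Icc 1 s := Finset.union_subset hI₀mem hIstarsub
  -- num J ≤ h * den J
  have hI₀J : I₀ ⊆ J := Finset.subset_union_left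
  have hsumJ : numI n0 nn xbar J = numI n0 nn xbar I₀ + ∑ i ∈ J \ I₀, (nn:ℝ) * xbar i := by
    unfold numI
    rw [← Finset.sum_sdiff hI₀J]; ring
  have hcardJ : ((J \ I₀).card : ℝ) + I₀.card = J.card := by
    exact_mod_cast Finset.card_sdiff_add_card_eq_card hI₀J
  have hJle : numI n0 nn xbar J ≤ h * denI n0 nn J := by
    have hbound : ∑ i ∈ J \ I₀, (nn:ℝ) * xbar i ≤ ∑ i ∈ J \ I₀, (nn:ℝ) * h := by
      apply Finset.sum_le_sum
      intro i hi
      have hiI : i ∈ Istar := by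
        rcases Finset.mem_sdiff.1 hi with ⟨hiJ, hiI₀⟩
        rcases Finset.mem_union.1 hiJ with h' | h'
        · exact absurd h' hiI₀
        · exact h'
      have : xbar i ≤ h := (Finset.mem_filter.1 hiI).2
      have hnn : (0:ℝ) ≤ (nn:ℝ) := by positivity
      nlinarith
    rw [hsumJ, hI₀eq]
    have : ∑ i ∈ J \ I₀, (nn:ℝ) * h = (nn:ℝ) * ((J \ I₀).card) * h := by
      rw [Finset.sum_const, nsmul_eq_mul]; ring
    have hc : h*((nn:ℝ)*((J).card:ℝ)) = h*((nn:ℝ)*(((J \ I₀).card):ℝ)) + h*((nn:ℝ)*((I₀.card):ℝ)) := by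
      rw [← hcardJ]; ring
    unfold denI at *
    linarith [hbound, this]
  have hJeq : numI n0 nn xbar J = h * denI n0 nn J :=
    le_antisymm hJle (treeMLE0_le h0 hJsub)
  -- num Istar = h * den Istar
  have hIstarJ : Istar ⊆ J := Finset.subset_union_right
  have hsumIstar : numI n0 nn xbar J
      = numI n0 nn xbar Istar + ∑ i ∈ J \ Istar, (nn:ℝ) * xbar i := by
    unfold numI
    rw [← Finset.sum_sdiff hIstarJ]; ring
  have hcardIstar : ((J \ Istar).card : ℝ) + Istar.card = J.card := by
    exact_mod_cast Finset.card_sdiff_add_card_eq_card hIstarJ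
  have hIstarle : numI n0 nn xbar Istar ≤ h * denI n0 nn Istar := by
    have hbound : ∑ i ∈ J \ Istar, (nn:ℝ) * h ≤ ∑ i ∈ J \ Istar, (nn:ℝ) * xbar i := by
      apply Finset.sum_le_sum
      intro i hi
      rcases Finset.mem_sdiff.1 hi with ⟨hiJ, hiIstar⟩
      have hiIcc : i ∈ Finset.Icc 1 s := hJsub hiJ
      have : ¬ (xbar i ≤ h) := by
        intro hcon
        exact hiIstar (Finset.mem_filter.2 ⟨hiIcc, hcon⟩)
      have : h ≤ xbar i := le_of_not_ge this
      have hnn : (0:ℝ) ≤ (nn:ℝ) := by positivity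
      nlinarith
    have hconst : ∑ i ∈ J \ Istar, (nn:ℝ) * h = (nn:ℝ) * ((J \ Istar).card) * h := by
      rw [Finset.sum_const, nsmul_eq_mul]; ring
    have hc : h*((nn:ℝ)*((J).card:ℝ)) = h*((nn:ℝ)*(((J \ Istar).card):ℝ)) + h*((nn:ℝ)*((Istar.card):ℝ)) := by
      rw [← hcardIstar]; ring
    unfold denI at *
    linarith [hbound, hsumIstar, hJeq, hconst]
  have hIstareq : numI n0 nn xbar Istar = h * denI n0 nn Istar :=
    le_antisymm hIstarle (treeMLE0_le h0 hIstarsub)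
  -- conclude
  have hsplit : ∑ i ∈ Finset.Icc 1 s, (nn : ℝ) * max (h - xbar i) 0
      = ∑ i ∈ Istar, (nn : ℝ) * (h - xbar i) := by
    rw [hIstar, Finset.sum_filter]
    apply Finset.sum_congr rfl
    intro i hi
    by_cases hxi : xbar i ≤ h
    · rw [if_pos hxi, max_eq_left (by linarith)]
    · rw [if_neg hxi, max_eq_right (by push_neg at hxi; linarith), mul_zero]
  rw [hsplit]
  have hexp : ∑ i ∈ Istar, (nn:ℝ) * (h - xbar i)
      = (nn:ℝ) * Istar.card * h - ∑ i ∈ Istar, (nn:ℝ) * xbar i := by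
    have hcongr : ∀ i ∈ Istar, (nn:ℝ)*(h - xbar i) = (nn:ℝ)*h - (nn:ℝ)*xbar i :=
      fun i _ => by ring
    rw [Finset.sum_congr rfl hcongr, Finset.sum_sub_distrib, Finset.sum_const, nsmul_eq_mul]
    ring
  have hnum : numI n0 nn xbar Istar = (n0:ℝ)*xbar 0 + ∑ i ∈ Istar, (nn:ℝ)*xbar i := rfl
  have hden : denI n0 nn Istar = (n0:ℝ) + (nn:ℝ)*Istar.card := rfl
  rw [hexp]
  rw [hnum, hden] at hIstareq
  linarith [hIstareq]

end Det

section Det2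

lemma posparts_ineq (a t h : ℝ) :
    (max (h - a) 0) ^ 2 + 2 * (max (h - a) 0) * (t - h) ≤ (max (t - a) 0) ^ 2 := by
  rcases le_or_gt h a with hha | hha
  · rw [max_eq_right (by linarith)]
    simp
  · rw [max_eq_left (by linarith)]
    rcases le_or_gt a t with hat | hat
    · rw [max_eq_left (by linarith)]
      nlinarith [sq_nonneg (t - h)]
    · rw [max_eq_right (by linarith)]
      nlinarith

lemma sq_feasible_ineq {a t m : ℝ} (hm : t ≤ m) :
    (max (t - a) 0) ^ 2 ≤ (a - m) ^ 2 := by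
  rcases le_or_gt t a with hta | hta
  · rw [max_eq_right (by linarith)]; simpa using sq_nonneg (a - m)
  · rw [max_eq_left (by linarith)]
    nlinarith

/-- Minimality of the tree-order MLE over feasible mean vectors. -/
lemma treeMLE_min {n0 : ℕ} (h0 : 1 ≤ n0) (nn s : ℕ) (xbar m : ℕ → ℝ)
    (hm : ∀ i ∈ Finset.Icc 1 s, m 0 ≤ m i) :
    (n0 : ℝ) * (xbar 0 - treeMLE0 n0 nn s xbar) ^ 2
      + ∑ i ∈ Finset.Icc 1 s, (nn : ℝ) * (max (treeMLE0 n0 nn s xbar - xbar i) 0) ^ 2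
    ≤ (n0 : ℝ) * (xbar 0 - m 0) ^ 2
      + ∑ i ∈ Finset.Icc 1 s, (nn : ℝ) * (xbar i - m i) ^ 2 := by
  set h := treeMLE0 n0 nn s xbar with hh
  set t := m 0 with ht
  have hfoc := treeMLE0_foc h0 nn s xbar
  rw [← hh] at hfoc
  have hterm : ∀ i ∈ Finset.Icc 1 s,
      (nn:ℝ) * (max (h - xbar i) 0) ^ 2 + 2 * (t - h) * ((nn:ℝ) * max (h - xbar i) 0)
        ≤ (nn:ℝ) * (xbar i - m i) ^ 2 := by
    intro i hi
    have h1 := posparts_ineq (xbar i) t h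
    have h2 := sq_feasible_ineq (a := xbar i) (hm i hi)
    have hnn : (0:ℝ) ≤ (nn:ℝ) := by positivity
    nlinarith
  have hsum := Finset.sum_le_sum hterm
  rw [Finset.sum_add_distrib] at hsum
  have hmul : ∑ i ∈ Finset.Icc 1 s, 2 * (t - h) * ((nn:ℝ) * max (h - xbar i) 0)
      = 2 * (t - h) * ∑ i ∈ Finset.Icc 1 s, (nn:ℝ) * max (h - xbar i) 0 := by
    rw [Finset.mul_sum]
  rw [hmul] at hsum
  have hfoc' : ∑ i ∈ Finset.Icc 1 s, (nn:ℝ) * max (h - xbar i) 0 = (n0:ℝ) * (xbar 0 - h) := by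
    linarith [hfoc]
  rw [hfoc'] at hsum
  have hnn : (0:ℝ) ≤ (n0:ℝ) := by positivity
  have h0sq : (n0:ℝ) * (xbar 0 - h) ^ 2 - 2 * (t - h) * ((n0:ℝ) * (xbar 0 - h))
      ≤ (n0:ℝ) * (xbar 0 - t) ^ 2 := by
    have hid : (n0:ℝ) * (xbar 0 - t) ^ 2
        = (n0:ℝ) * (xbar 0 - h) ^ 2 - 2 * (t - h) * ((n0:ℝ) * (xbar 0 - h))
          + (n0:ℝ) * (t - h) ^ 2 := by ring
    linarith [hid, mul_nonneg hnn (sq_nonneg (t - h))]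
  linarith

/-- Decomposition of the sum of squares around an arbitrary center. -/
lemma sq_sum_decomp (x : ℕ → ℝ) (n : ℕ) (c : ℝ) :
    ∑ j ∈ Finset.range n, (x j - c) ^ 2
      = ∑ j ∈ Finset.range n, (x j - sampleMean x n) ^ 2
        + (n : ℝ) * (sampleMean x n - c) ^ 2 := by
  rcases Nat.eq_zero_or_pos n with hn | hn
  · simp [hn]
  set mbar := sampleMean x n with hm
  have hsum : ∑ j ∈ Finset.range n, x j = (n : ℝ) * mbar := by
    rw [hm, sampleMean]
    field_simp
  have hcongr : ∀ j ∈ Finset.range n, (x j - c) ^ 2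
      = (x j - mbar) ^ 2 + ((mbar - c) * (2 * x j) - (mbar - c) * (c + mbar)) := by
    intro j _; ring
  rw [Finset.sum_congr rfl hcongr, Finset.sum_add_distrib, Finset.sum_sub_distrib,
    ← Finset.mul_sum, ← Finset.mul_sum, hsum, Finset.sum_const, Finset.card_range,
    nsmul_eq_mul]
  ring

lemma sigmaHat_nonneg (n0 nn s : ℕ) (X : ℕ → ℕ → ℝ) : 0 ≤ sigmaHat n0 nn s X := by
  unfold sigmaHat
  apply div_nonneg _ (by positivity)
  apply add_nonneg
  · exact Finset.sum_nonneg fun j _ => sq_nonneg _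
  · exact Finset.sum_nonneg fun i _ => Finset.sum_nonneg fun j _ => sq_nonneg _

/-- Key pointwise bound: the constrained MLE variance estimator is at most the
average squared deviation from any feasible mean vector. -/
lemma sigmaHat_le_feasible {n0 nn : ℕ} (h0 : 1 ≤ n0) (hn : 1 ≤ nn) (s : ℕ)
    (X : ℕ → ℕ → ℝ) (m : ℕ → ℝ) (hm : ∀ i ∈ Finset.Icc 1 s, m 0 ≤ m i) :
    sigmaHat n0 nn s X
      ≤ (∑ j ∈ Finset.range n0, (X 0 j - m 0) ^ 2
          + ∑ i ∈ Finset.Icc 1 s, ∑ j ∈ Finset.range nn, (X i j - m i) ^ 2)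
        / ((n0 + s * nn : ℕ) : ℝ) := by
  unfold sigmaHat
  have hden : (0:ℝ) < ((n0 + s * nn : ℕ) : ℝ) := by
    have : 0 < n0 + s * nn := by omega
    exact_mod_cast this
  rw [div_le_div_iff_of_pos_right hden]
  set xb := xbarVec n0 nn X with hxb
  set h := treeMLE0 n0 nn s xb with hh
  have hxb0 : xb 0 = sampleMean (X 0) n0 := by simp [hxb, xbarVec]
  have hxbi : ∀ i ∈ Finset.Icc 1 s, xb i = sampleMean (X i) nn := by
    intro i hi
    have hi1 : 1 ≤ i := (Finset.mem_Icc.1 hi).1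
    have : i ≠ 0 := by omega
    simp [hxb, xbarVec, this]
  have hMLE : ∀ i, treeMLE n0 nn s xb i = max h (xb i) := fun i => rfl
  -- decompose left side
  have hL0 : ∑ j ∈ Finset.range n0, (X 0 j - h) ^ 2
      = ∑ j ∈ Finset.range n0, (X 0 j - sampleMean (X 0) n0) ^ 2
        + (n0:ℝ) * (xb 0 - h) ^ 2 := by
    rw [sq_sum_decomp (X 0) n0 h, hxb0]
  have hLi : ∀ i ∈ Finset.Icc 1 s,
      ∑ j ∈ Finset.range nn, (X i j - treeMLE n0 nn s xb i) ^ 2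
      = ∑ j ∈ Finset.range nn, (X i j - sampleMean (X i) nn) ^ 2
        + (nn:ℝ) * (max (h - xb i) 0) ^ 2 := by
    intro i hi
    rw [hMLE, sq_sum_decomp (X i) nn (max h (xb i)), ← hxbi i hi]
    congr 1
    rcases le_total h (xb i) with hc | hc
    · rw [max_eq_right hc, max_eq_right (by linarith)]
      ring
    · rw [max_eq_left hc, max_eq_left (by linarith)]
      ring
  have hR0 : ∑ j ∈ Finset.range n0, (X 0 j - m 0) ^ 2
      = ∑ j ∈ Finset.range n0, (X 0 j - sampleMean (X 0) n0) ^ 2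
        + (n0:ℝ) * (xb 0 - m 0) ^ 2 := by
    rw [sq_sum_decomp (X 0) n0 (m 0), hxb0]
  have hRi : ∀ i ∈ Finset.Icc 1 s,
      ∑ j ∈ Finset.range nn, (X i j - m i) ^ 2
      = ∑ j ∈ Finset.range nn, (X i j - sampleMean (X i) nn) ^ 2
        + (nn:ℝ) * (xb i - m i) ^ 2 := by
    intro i hi
    rw [sq_sum_decomp (X i) nn (m i), ← hxbi i hi]
  rw [hL0, Finset.sum_congr rfl hLi, hR0, Finset.sum_congr rfl hRi,
    Finset.sum_add_distrib, Finset.sum_add_distrib]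
  have hkey := treeMLE_min h0 nn s xb m hm
  rw [← hh] at hkey
  linarith [hkey]

end Det2

section Enum

variable (S : ℕ → Finset (ℕ × ℕ))

/-- Cumulative list enumerating a monotone family of finsets block by block. -/
def cumList : ℕ → List (ℕ × ℕ)
  | 0 => (S 0).toList
  | s + 1 => cumList s ++ ((S (s + 1)) \ (S s)).toList

variable {S} (hS : Monotone S)
include hS

lemma cumList_toFinset : ∀ s, (cumList S s).toFinset = S s := by
  intro s
  induction s with
  | zero => simp [cumList]
  | succ s ih =>
      rw [cumList, List.toFinset_append, ih, Finset.toList_toFinset,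
        Finset.union_sdiff_of_subset (hS (Nat.le_succ s))]

lemma cumList_nodup : ∀ s, (cumList S s).Nodup := by
  intro s
  induction s with
  | zero => exact Finset.nodup_toList _
  | succ s ih =>
      rw [cumList]
      refine List.Nodup.append ih (Finset.nodup_toList _) ?_
      intro a ha hb
      have haS : a ∈ S s := by
        rw [← cumList_toFinset hS s]; exact List.mem_toFinset.2 ha
      have : a ∈ (S (s+1)) \ (S s) := Finset.mem_toList.1 hb
      exact (Finset.mem_sdiff.1 this).2 haS

lemma cumList_length : ∀ s, (cumList S s).length = (S s).card := by
  intro s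
  have h1 := cumList_toFinset hS s
  have h2 := cumList_nodup hS s
  rw [← h1, List.toFinset_card_of_nodup h2]

lemma cumList_prefix {s t : ℕ} (hst : s ≤ t) : (cumList S s) <+: (cumList S t) := by
  induction t with
  | zero => rw [Nat.le_zero.1 hst]
  | succ t ih =>
      rcases Nat.lt_or_ge s (t+1) with hlt | hge
      · have := ih (Nat.lt_succ_iff.1 hlt)
        exact this.trans ⟨((S (t+1)) \ (S t)).toList, rfl⟩
      · rw [Nat.le_antisymm hst hge]

lemma getD_of_prefix {L M : List (ℕ × ℕ)} (hp : L <+: M) {k : ℕ} (hk : k < L.length) :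
    M.getD k (0,0) = L.getD k (0,0) := by
  obtain ⟨r, rfl⟩ := hp
  exact List.getD_append _ _ _ _ hk

end Enum

section Gauss

open Real

lemma integral_sq_exp_neg_mul_sq {b : ℝ} (hb : 0 < b) :
    ∫ x : ℝ, x ^ 2 * rexp (-b * x ^ 2) = Real.sqrt π / (2 * b * Real.sqrt b) := by
  have hint : Integrable fun x : ℝ => x ^ 2 * rexp (-b * x ^ 2) := by
    have := integrable_rpow_mul_exp_neg_mul_sq hb (s := 2) (by norm_num)
    simpa [Real.rpow_two] using this
  have heven : ∀ x : ℝ, (-x) ^ 2 * rexp (-b * (-x) ^ 2) = x ^ 2 * rexp (-b * x ^ 2) := by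
    intro x; rw [neg_pow]; norm_num
  -- split at 0
  have hIoi : ∫ x in Set.Ioi (0:ℝ), x ^ 2 * rexp (-b * x ^ 2)
      = b ^ (-(2 + 1) / 2 : ℝ) * (1 / 2) * Real.Gamma ((2 + 1) / 2) := by
    rw [← integral_rpow_mul_exp_neg_mul_rpow (p := 2) (q := 2) (by norm_num) (by norm_num) hb]
    refine setIntegral_congr_fun measurableSet_Ioi (fun x hx => ?_)
    simp [Real.rpow_two]
  have hIic : ∫ x in Set.Iic (0:ℝ), x ^ 2 * rexp (-b * x ^ 2)
      = ∫ x in Set.Ioi (0:ℝ), x ^ 2 * rexp (-b * x ^ 2) := by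
    have hcn := integral_comp_neg_Ioi (c := 0) (f := fun x : ℝ => x ^ 2 * rexp (-b * x ^ 2))
    calc ∫ x in Set.Iic (0:ℝ), x ^ 2 * rexp (-b * x ^ 2)
        = ∫ x in Set.Iic (-0:ℝ), x ^ 2 * rexp (-b * x ^ 2) := by norm_num
      _ = ∫ x in Set.Ioi (0:ℝ), (-x) ^ 2 * rexp (-b * (-x) ^ 2) := hcn.symm
      _ = ∫ x in Set.Ioi (0:ℝ), x ^ 2 * rexp (-b * x ^ 2) :=
          setIntegral_congr_fun measurableSet_Ioi (fun x _ => heven x)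
  have hsplit : ∫ x : ℝ, x ^ 2 * rexp (-b * x ^ 2)
      = (∫ x in Set.Iic (0:ℝ), x ^ 2 * rexp (-b * x ^ 2))
        + ∫ x in Set.Ioi (0:ℝ), x ^ 2 * rexp (-b * x ^ 2) := by
    rw [← setIntegral_union (Set.Iic_disjoint_Ioi le_rfl) measurableSet_Ioi
      hint.integrableOn hint.integrableOn, Set.Iic_union_Ioi, Measure.restrict_univ]
  have hGamma : Real.Gamma ((2 + 1) / 2) = Real.sqrt π / 2 := by
    rw [show ((2:ℝ) + 1) / 2 = 1/2 + 1 by norm_num, Real.Gamma_add_one (by norm_num),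
      Real.Gamma_one_half_eq]
    ring
  have hrpow : b ^ (-(2 + 1) / 2 : ℝ) = (b * Real.sqrt b)⁻¹ := by
    rw [show (-(2+1)/2 : ℝ) = -(1 + 1/2) by norm_num, Real.rpow_neg hb.le,
      Real.rpow_add hb, Real.rpow_one, ← Real.sqrt_eq_rpow]
  rw [hsplit, hIic, hIoi, hGamma, hrpow]
  have hsb : Real.sqrt b ≠ 0 := Real.sqrt_ne_zero'.2 hb
  field_simp
  ring

lemma gaussianPDF_eq_toNNReal (m : ℝ) (v : ℝ≥0) :
    gaussianPDF m v = fun x => ((gaussianPDFReal m v x).toNNReal : ENNReal) := by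
  funext x
  rw [gaussianPDF, ENNReal.ofReal]

lemma integral_gaussianReal_eq {v : ℝ≥0} (hv : v ≠ 0) (g : ℝ → ℝ) :
    (∫ x, g x ∂(gaussianReal 0 v)) = ∫ x, gaussianPDFReal 0 v x * g x := by
  rw [gaussianReal_of_var_ne_zero _ hv, gaussianPDF_eq_toNNReal,
    integral_withDensity_eq_integral_smul (measurable_gaussianPDFReal 0 v).real_toNNReal g]
  refine integral_congr_ae (Filter.Eventually.of_forall fun x => ?_)
  simp only [NNReal.smul_def, Real.coe_toNNReal _ (gaussianPDFReal_nonneg 0 v x), smul_eq_mul]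

lemma pdf_mul_sq_eq {v : ℝ≥0} (hv : v ≠ 0) (x : ℝ) :
    gaussianPDFReal 0 v x * x ^ 2
      = (Real.sqrt (2 * Real.pi * v))⁻¹ * (x ^ 2 * Real.exp (-(2 * (v:ℝ))⁻¹ * x ^ 2)) := by
  have hw : (0:ℝ) < (v:ℝ) := by positivity
  rw [gaussianPDFReal]
  have : -(x - 0) ^ 2 / (2 * (v:ℝ)) = -(2 * (v:ℝ))⁻¹ * x ^ 2 := by
    field_simp
    ring
  rw [this]; ring

lemma integrable_sq_gaussianReal {v : ℝ≥0} (hv : v ≠ 0) :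
    Integrable (fun x : ℝ => x ^ 2) (gaussianReal 0 v) := by
  have hw : (0:ℝ) < (v:ℝ) := by positivity
  have hb : (0:ℝ) < (2 * (v:ℝ))⁻¹ := by positivity
  rw [gaussianReal_of_var_ne_zero _ hv, gaussianPDF_eq_toNNReal,
    integrable_withDensity_iff_integrable_smul (measurable_gaussianPDFReal 0 v).real_toNNReal]
  have : Integrable (fun x : ℝ => gaussianPDFReal 0 v x * x ^ 2) := by
    have hint : Integrable fun x : ℝ => x ^ 2 * Real.exp (-(2 * (v:ℝ))⁻¹ * x ^ 2) := by
      have := integrable_rpow_mul_exp_neg_mul_sq hb (s := 2) (by norm_num)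
      simpa [Real.rpow_two] using this
    have h2 := hint.const_mul (Real.sqrt (2 * Real.pi * v))⁻¹
    refine h2.congr (Filter.Eventually.of_forall fun x => ?_)
    simp only [pdf_mul_sq_eq hv]
  refine this.congr (Filter.Eventually.of_forall fun x => ?_)
  simp only [NNReal.smul_def, Real.coe_toNNReal _ (gaussianPDFReal_nonneg 0 v x), smul_eq_mul]

lemma integral_sq_gaussianReal {v : ℝ≥0} (hv : v ≠ 0) :
    (∫ x, x ^ 2 ∂(gaussianReal 0 v)) = (v : ℝ) := by
  have hw : (0:ℝ) < (v:ℝ) := by positivity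
  have hb : (0:ℝ) < (2 * (v:ℝ))⁻¹ := by positivity
  rw [integral_gaussianReal_eq hv]
  have : ∫ x, gaussianPDFReal 0 v x * x ^ 2
      = (Real.sqrt (2 * Real.pi * v))⁻¹ * ∫ x, x ^ 2 * Real.exp (-(2 * (v:ℝ))⁻¹ * x ^ 2) := by
    rw [← integral_const_mul]
    exact integral_congr_ae (Filter.Eventually.of_forall fun x => pdf_mul_sq_eq hv x)
  rw [this, integral_sq_exp_neg_mul_sq hb]
  -- algebraic computation
  have hpi := Real.pi_pos
  have h2v : (0:ℝ) < 2 * (v:ℝ) := by positivity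
  have hsqb : Real.sqrt ((2 * (v:ℝ))⁻¹) = (Real.sqrt (2 * (v:ℝ)))⁻¹ := by
    rw [Real.sqrt_inv]
  have hsplit : Real.sqrt (2 * Real.pi * (v:ℝ)) = Real.sqrt Real.pi * Real.sqrt (2 * (v:ℝ)) := by
    rw [← Real.sqrt_mul Real.pi_pos.le]
    congr 1; ring
  rw [hsqb, hsplit]
  have h1 : Real.sqrt Real.pi ≠ 0 := by positivity
  have h2 : Real.sqrt (2 * (v:ℝ)) ≠ 0 := by positivity
  have hsq : Real.sqrt (2 * (v:ℝ)) * Real.sqrt (2 * (v:ℝ)) = 2 * (v:ℝ) :=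
    Real.mul_self_sqrt h2v.le
  field_simp

end Gauss


/-- Under A1–A4, if the total sample size `N⁽ˢ⁾ = n₀⁽ˢ⁾ + s n⁽ˢ⁾ → ∞`,
then almost surely `0 ≤ limsup_{s→∞} σ̂²_{(s)} ≤ σ²`. -/
theorem limsup_sigmaHat_le_variance
    {Ω : Type*} [MeasurableSpace Ω] (P : Measure Ω) [IsProbabilityMeasure P]
    (μ : ℕ → ℝ) (v : ℝ≥0) (hv : v ≠ 0)
    (n0 nn : ℕ → ℕ)
    -- A1: tree order restriction
    (hA1 : ∀ i, 1 ≤ i → μ 0 ≤ μ i)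
    -- A2: uniformly bounded means
    (hA2 : ∃ B > 0, ∀ i, μ i ≤ B)
    -- A4: common treatment sample size, non-decreasing sample sizes
    (h0pos : ∀ s, 1 ≤ n0 s) (hnpos : ∀ s, 1 ≤ nn s)
    (h0mono : Monotone n0) (hnmono : Monotone nn)
    -- A3: independent normal observations, common variance v
    (X : ℕ → ℕ → Ω → ℝ)
    (hmeas : ∀ i j, Measurable (X i j))
    (hindep : iIndepFun (fun p : ℕ × ℕ => X p.1 p.2) P)
    (hdist : ∀ i j, Measure.map (X i j) P = gaussianReal (μ i) v)
    (hN : Tendsto (fun s : ℕ => n0 s + s * nn s) atTop atTop) :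
    ∀ᵐ ω ∂P,
      0 ≤ Filter.limsup (fun s : ℕ => sigmaHat (n0 s) (nn s) s fun i j => X i j ω) atTop ∧
      Filter.limsup (fun s : ℕ => sigmaHat (n0 s) (nn s) s fun i j => X i j ω) atTop
        ≤ (v : ℝ) := by
  classical
  set S : ℕ → Finset (ℕ × ℕ) := fun s =>
    ({0} ×ˢ Finset.range (n0 s)) ∪ ((Finset.Icc 1 s) ×ˢ Finset.range (nn s)) with hSdef
  have hSmono : Monotone S := by
    intro s t hst
    apply Finset.union_subset_union
    · exact Finset.product_subset_product (le_refl _) (Finset.range_subset_range.2 (h0mono hst))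
    · exact Finset.product_subset_product (Finset.Icc_subset_Icc le_rfl hst)
        (Finset.range_subset_range.2 (hnmono hst))
  set N : ℕ → ℕ := fun s => n0 s + s * nn s with hNdef
  have hdisj : ∀ s, Disjoint ({0} ×ˢ Finset.range (n0 s))
      ((Finset.Icc 1 s) ×ˢ Finset.range (nn s)) := by
    intro s
    rw [Finset.disjoint_left]
    intro p hp hp'
    have h1 : p.1 = 0 := by
      have := (Finset.mem_product.1 hp).1
      simpa using this
    have h2 : 1 ≤ p.1 := (Finset.mem_Icc.1 (Finset.mem_product.1 hp').1).1
    omega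
  have hScard : ∀ s, (S s).card = N s := by
    intro s
    rw [hSdef]
    rw [Finset.card_union_of_disjoint (hdisj s)]
    simp [Finset.card_product, Nat.card_Icc]
    rfl
  have hNmono : Monotone N := by
    intro a b hab
    rw [← hScard a, ← hScard b]
    exact Finset.card_le_card (hSmono hab)
  have hNtop : Tendsto N atTop atTop := hN
  have hex : ∀ k : ℕ, ∃ s, k < N s := fun k => (hNtop.eventually_gt_atTop k).exists
  set e : ℕ → ℕ × ℕ := fun k => (cumList S (Nat.find (hex k))).getD k (0,0) with hedef
  have hcumlen : ∀ s, (cumList S s).length = N s := by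
    intro s; rw [cumList_length hSmono s, hScard]
  have he_spec : ∀ s k, k < N s → e k = (cumList S s).getD k (0,0) := by
    intro s k hk
    have h1 : k < N (Nat.find (hex k)) := Nat.find_spec (hex k)
    rcases le_total (Nat.find (hex k)) s with hle | hle
    · rw [hedef]
      exact (getD_of_prefix hSmono (cumList_prefix hSmono hle) (by rw [hcumlen]; exact h1)).symm
    · rw [hedef]
      exact getD_of_prefix hSmono (cumList_prefix hSmono hle) (by rw [hcumlen]; exact hk)
  have he_mem : ∀ s k, k < N s → e k ∈ S s := by
    intro s k hk
    rw [he_spec s k hk]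
    have hlen : k < (cumList S s).length := by rw [hcumlen]; exact hk
    rw [List.getD_eq_getElem _ _ hlen]
    rw [← cumList_toFinset hSmono s]
    exact List.mem_toFinset.2 (List.getElem_mem _)
  have he_inj : ∀ s, Set.InjOn e ((Finset.range (N s) : Finset ℕ) : Set ℕ) := by
    intro s k hk l hl hekl
    simp only [Finset.coe_range, Set.mem_Iio] at hk hl
    rw [he_spec s k hk, he_spec s l hl] at hekl
    have hlenk : k < (cumList S s).length := by rw [hcumlen]; exact hk
    have hlenl : l < (cumList S s).length := by rw [hcumlen]; exact hl
    rw [List.getD_eq_getElem _ _ hlenk, List.getD_eq_getElem _ _ hlenl] at hekl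
    exact (List.Nodup.getElem_inj_iff (cumList_nodup hSmono s)).1 hekl
  have he_image : ∀ s, (Finset.range (N s)).image e = S s := by
    intro s
    apply Finset.eq_of_subset_of_card_le
    · intro p hp
      obtain ⟨k, hk, rfl⟩ := Finset.mem_image.1 hp
      exact he_mem s k (Finset.mem_range.1 hk)
    · rw [Finset.card_image_of_injOn (he_inj s), Finset.card_range, hScard]
  have he_ne : ∀ k l : ℕ, k ≠ l → e k ≠ e l := by
    intro k l hkl
    obtain ⟨s1, h1⟩ := hex k
    obtain ⟨s2, h2⟩ := hex l
    have hk : k < N (max s1 s2) := lt_of_lt_of_le h1 (hNmono (le_max_left _ _))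
    have hl : l < N (max s1 s2) := lt_of_lt_of_le h2 (hNmono (le_max_right _ _))
    intro hcon
    exact hkl (he_inj (max s1 s2) (by simpa using hk) (by simpa using hl) hcon)
  -- the squared deviations
  have hsqm : Measurable fun x : ℝ => x ^ 2 := by fun_prop
  have hsubm : ∀ c : ℝ, Measurable fun x : ℝ => x - c := fun c => by fun_prop
  set Z : ℕ → Ω → ℝ := fun k ω => (X (e k).1 (e k).2 ω - μ (e k).1) ^ 2 with hZdef
  have hZmeas : ∀ k, Measurable (Z k) :=
    fun k => ((hmeas _ _).sub measurable_const).pow_const 2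
  have hmap : ∀ k, Measure.map (Z k) P = (gaussianReal 0 v).map (fun x : ℝ => x ^ 2) := by
    intro k
    have h1 : Z k = (fun x : ℝ => x ^ 2) ∘
        ((fun x : ℝ => x - μ (e k).1) ∘ (X (e k).1 (e k).2)) := rfl
    rw [h1, ← Measure.map_map (hsqm)
      ((hsubm _).comp (hmeas _ _))]
    congr 1
    rw [← Measure.map_map (hsubm _) (hmeas _ _), hdist]
    have h2 := gaussianReal_map_add_const (μ := μ (e k).1) (v := v) (-(μ (e k).1))
    rw [show μ (e k).1 + -(μ (e k).1) = 0 by ring] at h2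
    rw [show (fun x : ℝ => x - μ (e k).1) = (· + -(μ (e k).1)) by
      funext x; rw [sub_eq_add_neg]]
    exact h2
  have hident : ∀ k, IdentDistrib (Z k) (Z 0) P P :=
    fun k => ⟨(hZmeas k).aemeasurable, (hZmeas 0).aemeasurable, by rw [hmap k, hmap 0]⟩
  have hpind : Pairwise (Function.onFun (IndepFun · · P) Z) := by
    intro k l hkl
    have hXind : IndepFun (X (e k).1 (e k).2) (X (e l).1 (e l).2) P :=
      hindep.indepFun (he_ne k l hkl)
    exact hXind.comp (hsqm.comp (hsubm _)) (hsqm.comp (hsubm _))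
  have hint : Integrable (Z 0) P := by
    have h1 : Integrable (id : ℝ → ℝ) ((gaussianReal 0 v).map (fun x : ℝ => x ^ 2)) :=
      (integrable_map_measure aestronglyMeasurable_id (hsqm.aemeasurable)).2
        (by simpa [Function.comp_def] using integrable_sq_gaussianReal hv)
    have h2 : Integrable (id : ℝ → ℝ) (Measure.map (Z 0) P) := by rw [hmap 0]; exact h1
    have := (integrable_map_measure aestronglyMeasurable_id ((hZmeas 0).aemeasurable)).1 h2
    simpa [Function.comp_def] using this
  have hmean : (∫ ω, Z 0 ω ∂P) = (v : ℝ) := by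
    calc ∫ ω, Z 0 ω ∂P = ∫ x, id x ∂(Measure.map (Z 0) P) :=
          (integral_map ((hZmeas 0).aemeasurable) aestronglyMeasurable_id).symm
      _ = ∫ x, id x ∂((gaussianReal 0 v).map (fun x : ℝ => x ^ 2)) := by rw [hmap 0]
      _ = ∫ x, id (x ^ 2) ∂(gaussianReal 0 v) :=
          integral_map (hsqm.aemeasurable) aestronglyMeasurable_id
      _ = (v : ℝ) := by simpa using integral_sq_gaussianReal hv
  have hslln := strong_law_ae_real Z hint hpind hident
  rw [show P[Z 0] = (v : ℝ) from hmean] at hslln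
  filter_upwards [hslln] with ω hω
  set a : ℕ → ℝ := fun s => sigmaHat (n0 s) (nn s) s fun i j => X i j ω with hadef
  set b : ℕ → ℝ := fun s => (∑ k ∈ Finset.range (N s), Z k ω) / (N s : ℝ) with hbdef
  have hb : Tendsto b atTop (𝓝 (v : ℝ)) := hω.comp hNtop
  have hab : ∀ s, a s ≤ b s := by
    intro s
    have h1 := sigmaHat_le_feasible (h0pos s) (hnpos s) s (fun i j => X i j ω) μ
      (fun i hi => hA1 i (Finset.mem_Icc.1 hi).1)
    have h2 : ∑ p ∈ S s, (X p.1 p.2 ω - μ p.1) ^ 2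
        = ∑ j ∈ Finset.range (n0 s), (X 0 j ω - μ 0) ^ 2
          + ∑ i ∈ Finset.Icc 1 s, ∑ j ∈ Finset.range (nn s), (X i j ω - μ i) ^ 2 := by
      rw [hSdef]
      rw [Finset.sum_union (hdisj s), Finset.sum_product, Finset.sum_product]
      simp
    have h3 : ∑ p ∈ S s, (X p.1 p.2 ω - μ p.1) ^ 2 = ∑ k ∈ Finset.range (N s), Z k ω := by
      rw [← he_image s, Finset.sum_image (fun k hk l hl h => he_inj s (by simpa using hk)
        (by simpa using hl) h)]
    calc a s ≤ (∑ j ∈ Finset.range (n0 s), (X 0 j ω - μ 0) ^ 2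
          + ∑ i ∈ Finset.Icc 1 s, ∑ j ∈ Finset.range (nn s), (X i j ω - μ i) ^ 2)
        / ((n0 s + s * nn s : ℕ) : ℝ) := h1
      _ = b s := by rw [hbdef, ← h2, h3]
  have ha0 : ∀ s, 0 ≤ a s := fun s => sigmaHat_nonneg _ _ _ _
  have hbddb : IsBoundedUnder (· ≤ ·) atTop b := hb.isBoundedUnder_le
  have hbdda : IsBoundedUnder (· ≤ ·) atTop a :=
    hbddb.mono_le (Filter.Eventually.of_forall hab)
  constructor
  · exact le_limsup_of_frequently_le (Filter.Frequently.of_forall ha0) hbdda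
  · have hblow : IsBoundedUnder (· ≥ ·) atTop a := isBoundedUnder_of ⟨0, fun s => ha0 s⟩
    have hcob : IsCoboundedUnder (· ≤ ·) atTop a := hblow.isCoboundedUnder_le
    have h1 : Filter.limsup a atTop ≤ Filter.limsup b atTop :=
      limsup_le_limsup (Filter.Eventually.of_forall hab) hcob hbddb
    rwa [hb.limsup_eq] at h1
end
end

section
/- Bounds on the MLE of the control mean: let ρ^{(s)} = s·n^{(s)}/n_0^{(s)} and λ^{(s)} = min_{1≤i≤s} (X̄_i^{(s)} − X̄_0^{(s)}). Then for any real observations, X̄_0^{(s)} + (ρ^{(s)}/(1+ρ^{(s)})) λ^{(s)} 𝟙{λ^{(s)} < 0} ≤ μ̂_0^{(s)} ≤ X̄_0^{(s)}. -/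
open MeasureTheory ProbabilityTheory Filter Finset BoundedContinuousFunction
open scoped NNReal Topology

noncomputable section


/-- `λ⁽ˢ⁾ = min_{1 ≤ i ≤ s} (X̄ᵢ − X̄₀)` (junk value `0` if `s = 0`). -/
def lamFun (s : ℕ) (xbar : ℕ → ℝ) : ℝ :=
  if h : (Finset.Icc 1 s).Nonempty then (Finset.Icc 1 s).inf' h fun i => xbar i - xbar 0
  else 0

/-- Bounds on the MLE of the control mean: with
`ρ⁽ˢ⁾ = s n / n₀` and `λ⁽ˢ⁾ = min_{1 ≤ i ≤ s} (X̄ᵢ − X̄₀)`, for arbitrary real sample means,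
`X̄₀ + (ρ/(1+ρ)) λ 𝟙{λ < 0} ≤ μ̂₀ ≤ X̄₀`. -/
theorem treeMLE0_bounds
    (n0 nn s : ℕ) (h0 : 1 ≤ n0) (hn : 1 ≤ nn) (hs : 1 ≤ s) (xbar : ℕ → ℝ) :
    xbar 0 + ((s : ℝ) * nn / n0) / (1 + (s : ℝ) * nn / n0) *
        (if lamFun s xbar < 0 then lamFun s xbar else 0)
      ≤ treeMLE0 n0 nn s xbar ∧ treeMLE0 n0 nn s xbar ≤ xbar 0 := by
  have hn0 : (0:ℝ) < n0 := by exact_mod_cast h0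
  have hnn : (0:ℝ) < nn := by exact_mod_cast hn
  have hsp : (0:ℝ) < s := by exact_mod_cast hs
  have hne : (Finset.Icc 1 s).Nonempty := ⟨1, by simp [hs]⟩
  set lam := lamFun s xbar with hlam
  set lam' := (if lam < 0 then lam else 0) with hlam'
  have hlam'0 : lam' ≤ 0 := by
    rw [hlam']; split <;> linarith
  have hlam'le : ∀ i ∈ Finset.Icc 1 s, lam' ≤ xbar i - xbar 0 := by
    intro i hi
    have h1 : lam ≤ xbar i - xbar 0 := by
      rw [hlam, lamFun, dif_pos hne]
      exact Finset.inf'_le _ hi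
    rw [hlam']; split
    · exact h1
    · push_neg at *; linarith
  have hAden : (0:ℝ) < (n0:ℝ) + s * nn := by positivity
  have hA : ((s : ℝ) * nn / n0) / (1 + (s : ℝ) * nn / n0) = (s:ℝ) * nn / ((n0:ℝ) + s * nn) := by
    rw [eq_div_iff (ne_of_gt hAden)]
    field_simp
  constructor
  · rw [hA, treeMLE0]
    apply Finset.le_inf'
    intro I hI
    have hIsub : I ⊆ Finset.Icc 1 s := Finset.mem_powerset.mp hI
    have hc : (I.card : ℝ) ≤ s := by
      have := Finset.card_le_card hIsub
      simp only [Nat.card_Icc] at this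
      exact_mod_cast le_trans this (by omega)
    have hd : (0:ℝ) < (n0:ℝ) + (nn:ℝ) * I.card := by positivity
    have hS : (nn:ℝ) * I.card * (xbar 0 + lam') ≤ ∑ i ∈ I, (nn : ℝ) * xbar i := by
      calc (nn:ℝ) * I.card * (xbar 0 + lam') = ∑ _i ∈ I, (nn:ℝ) * (xbar 0 + lam') := by
            rw [Finset.sum_const]; push_cast; ring
        _ ≤ ∑ i ∈ I, (nn : ℝ) * xbar i := by
            apply Finset.sum_le_sum
            intro i hi
            have := hlam'le i (hIsub hi)
            nlinarith
    rw [le_div_iff₀ hd]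
    have hkey : (s:ℝ)*nn/((n0:ℝ)+s*nn) * lam' * ((n0:ℝ)+(nn:ℝ)*I.card) ≤ (nn:ℝ)*I.card*lam' := by
      rw [div_mul_eq_mul_div, div_mul_eq_mul_div, div_le_iff₀ hAden]
      nlinarith [mul_nonneg (mul_nonneg (mul_nonneg hn0.le hnn.le) (sub_nonneg.mpr hc)) (neg_nonneg.mpr hlam'0)]
    nlinarith [hkey, hS]
  · rw [treeMLE0]
    have h := Finset.inf'_le (s := (Finset.Icc 1 s).powerset)
      (fun I => ((n0 : ℝ) * xbar 0 + ∑ i ∈ I, (nn : ℝ) * xbar i)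
        / ((n0 : ℝ) + (nn : ℝ) * I.card)) (Finset.empty_mem_powerset _)
    exact h.trans_eq (by simp [mul_div_assoc, mul_div_cancel_left₀ _ (ne_of_gt hn0)])
end
end

section
/- Suppose n^{(s)}/log s → ∞ as s → ∞. Then under assumptions A1–A4 the constrained MLE μ̂_0^{(s)} converges in probability to μ_0 if and only if n_0^{(s)} → ∞. -/
open MeasureTheory ProbabilityTheory Filter Finset BoundedContinuousFunction
open scoped NNReal Topology

noncomputable section


open scoped ENNReal

section AuxLemmas

lemma gaussianPDFReal_mul_exp (m : ℝ) {v : ℝ≥0} (hv : v ≠ 0) (t x : ℝ) :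
    Real.exp (t * x) * gaussianPDFReal m v x
      = Real.exp (t * m + v * t ^ 2 / 2) * gaussianPDFReal (m + v * t) v x := by
  have hv' : (v : ℝ) ≠ 0 := by exact_mod_cast hv
  unfold gaussianPDFReal
  rw [mul_left_comm, mul_left_comm (Real.exp _), ← Real.exp_add, ← Real.exp_add]
  congr 1
  field_simp
  ring

lemma integrable_exp_mul_gaussianReal (m : ℝ) {v : ℝ≥0} (hv : v ≠ 0) (t : ℝ) :
    Integrable (fun x => Real.exp (t * x)) (gaussianReal m v) := by
  rw [gaussianReal_of_var_ne_zero _ hv]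
  have hpdf : (gaussianPDF m v)
      = fun x => ((Real.toNNReal (gaussianPDFReal m v x) : ℝ≥0) : ℝ≥0∞) := by
    ext x; rfl
  rw [hpdf, integrable_withDensity_iff_integrable_smul
    ((measurable_gaussianPDFReal m v).real_toNNReal)]
  have heq : (fun x => (Real.toNNReal (gaussianPDFReal m v x) : ℝ≥0) • Real.exp (t * x))
      = fun x => Real.exp (t * m + v * t ^ 2 / 2) * gaussianPDFReal (m + v * t) v x := by
    ext x
    rw [NNReal.smul_def, smul_eq_mul, Real.coe_toNNReal _ (gaussianPDFReal_nonneg m v x),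
      mul_comm, gaussianPDFReal_mul_exp m hv]
  rw [heq]
  exact (integrable_gaussianPDFReal _ _).const_mul _

lemma integral_exp_mul_gaussianReal (m : ℝ) {v : ℝ≥0} (hv : v ≠ 0) (t : ℝ) :
    ∫ x, Real.exp (t * x) ∂(gaussianReal m v) = Real.exp (t * m + v * t ^ 2 / 2) := by
  rw [gaussianReal_of_var_ne_zero _ hv]
  have hpdf : (gaussianPDF m v)
      = fun x => ((Real.toNNReal (gaussianPDFReal m v x) : ℝ≥0) : ℝ≥0∞) := by
    ext x; rfl
  rw [hpdf, integral_withDensity_eq_integral_smul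
    ((measurable_gaussianPDFReal m v).real_toNNReal)]
  have heq : (fun x => (Real.toNNReal (gaussianPDFReal m v x) : ℝ≥0) • Real.exp (t * x))
      = fun x => Real.exp (t * m + v * t ^ 2 / 2) * gaussianPDFReal (m + v * t) v x := by
    ext x
    rw [NNReal.smul_def, smul_eq_mul, Real.coe_toNNReal _ (gaussianPDFReal_nonneg m v x),
      mul_comm, gaussianPDFReal_mul_exp m hv]
  rw [heq, integral_const_mul, integral_gaussianPDFReal_eq_one _ hv, mul_one]

variable {Ω : Type*} [MeasurableSpace Ω] {P : Measure Ω}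

lemma integrable_exp_mul_of_gauss [IsProbabilityMeasure P] {Y : Ω → ℝ} (hY : Measurable Y)
    {m : ℝ} {v : ℝ≥0} (hv : v ≠ 0)
    (hmap : Measure.map Y P = gaussianReal m v) (t : ℝ) :
    Integrable (fun ω => Real.exp (t * Y ω)) P := by
  have h := integrable_exp_mul_gaussianReal m hv t
  rw [← hmap] at h
  exact (integrable_map_measure (((measurable_const_mul t).exp).aestronglyMeasurable)
    hY.aemeasurable).1 h

lemma mgf_of_gauss [IsProbabilityMeasure P] {Y : Ω → ℝ} (hY : Measurable Y)
    {m : ℝ} {v : ℝ≥0} (hv : v ≠ 0)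
    (hmap : Measure.map Y P = gaussianReal m v) (t : ℝ) :
    mgf Y P t = Real.exp (t * m + v * t ^ 2 / 2) := by
  rw [mgf, ← integral_exp_mul_gaussianReal m hv t, ← hmap,
    integral_map hY.aemeasurable (((measurable_const_mul t).exp).aestronglyMeasurable)]

lemma ProbabilityTheory.iIndepFun.precomp' {ι ι' : Type*} [Nonempty ι'] {β : Type*} [mβ : MeasurableSpace β]
    {f : ι → Ω → β} (hf : iIndepFun f P) {g : ι' → ι}
    (hg : Function.Injective g) :
    iIndepFun (fun j => f (g j)) P := by
  rw [iIndepFun_iff_measure_inter_preimage_eq_mul] at hf ⊢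
  intro S sets hsets
  classical
  have hleft : ∀ j : ι', Function.invFun g (g j) = j := Function.leftInverse_invFun hg
  have h := hf (S.image g) (sets := fun i => sets (Function.invFun g i)) ?_
  · have h1 : (⋂ i ∈ S.image g, f i ⁻¹' sets (Function.invFun g i))
        = ⋂ j ∈ S, f (g j) ⁻¹' sets j := by
      rw [Finset.set_biInter_finset_image]
      exact Set.iInter₂_congr fun j hj => by rw [hleft j]
    have h2 : (∏ i ∈ S.image g, P (f i ⁻¹' sets (Function.invFun g i)))
        = ∏ j ∈ S, P (f (g j) ⁻¹' sets j) := by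
      rw [Finset.prod_image (fun a _ b _ hab => hg hab)]
      exact Finset.prod_congr rfl fun j hj => by rw [hleft j]
    rw [h1, h2] at h
    exact h
  · intro i hi
    rcases Finset.mem_image.1 hi with ⟨j, hj, rfl⟩
    show MeasurableSet (sets (Function.invFun g (g j)))
    rw [hleft j]
    exact hsets j hj

lemma gauss_tail_bounds [IsProbabilityMeasure P] {Y : ℕ → Ω → ℝ} (hmeas : ∀ j, Measurable (Y j))
    (hind : iIndepFun Y P) {θ : ℝ} {v : ℝ≥0} (hv : v ≠ 0)
    (hmap : ∀ j, Measure.map (Y j) P = gaussianReal θ v) {n : ℕ} (hn : 1 ≤ n) {ε : ℝ}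
    (hε : 0 < ε) :
    P {ω | ε ≤ sampleMean (fun j => Y j ω) n - θ}
        ≤ ENNReal.ofReal (Real.exp (-(n * ε ^ 2 / (2 * v))))
      ∧ P {ω | sampleMean (fun j => Y j ω) n - θ ≤ -ε}
        ≤ ENNReal.ofReal (Real.exp (-(n * ε ^ 2 / (2 * v)))) := by
  have hvpos : (0 : ℝ) < v := by
    have h := v.2
    rcases h.lt_or_eq with h | h
    · exact h
    · exact absurd (NNReal.coe_injective (by simpa using h.symm)) hv
  have hnpos : (0 : ℝ) < n := by exact_mod_cast hn
  have hint : ∀ t : ℝ, Integrable (fun ω => Real.exp (t * (∑ j ∈ Finset.range n, Y j) ω)) P :=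
    fun t => hind.integrable_exp_mul_sum hmeas
      (fun j _ => integrable_exp_mul_of_gauss (hmeas j) hv (hmap j) t)
  have hmgf : ∀ t : ℝ, mgf (∑ j ∈ Finset.range n, Y j) P t
      = Real.exp (n * (t * θ + v * t ^ 2 / 2)) := by
    intro t
    rw [hind.mgf_sum hmeas]
    rw [Finset.prod_congr rfl fun j _ => mgf_of_gauss (hmeas j) hv (hmap j) t]
    rw [Finset.prod_const, Finset.card_range, ← Real.exp_nat_mul]
  constructor
  · have hset : {ω | ε ≤ sampleMean (fun j => Y j ω) n - θ}
        = {ω | (n : ℝ) * (θ + ε) ≤ (∑ j ∈ Finset.range n, Y j) ω} := by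
      ext ω
      simp only [Set.mem_setOf_eq, sampleMean, Finset.sum_apply]
      rw [le_sub_iff_add_le, add_comm, le_div_iff₀ hnpos, mul_comm]
    rw [hset]
    have hb := measure_ge_le_exp_mul_mgf (μ := P) (X := ∑ j ∈ Finset.range n, Y j)
      ((n : ℝ) * (θ + ε)) (t := ε / v) (by positivity) (hint _)
    rw [hmgf, ← Real.exp_add] at hb
    have harith : -(ε / v) * ((n : ℝ) * (θ + ε)) + n * (ε / v * θ + v * (ε / v) ^ 2 / 2)
        = -(n * ε ^ 2 / (2 * v)) := by field_simp; ring
    rw [harith] at hb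
    calc P _ = ENNReal.ofReal
          (P {ω | (n : ℝ) * (θ + ε) ≤ (∑ j ∈ Finset.range n, Y j) ω}).toReal :=
          (ENNReal.ofReal_toReal (measure_ne_top P _)).symm
      _ ≤ _ := ENNReal.ofReal_le_ofReal hb
  · have hset : {ω | sampleMean (fun j => Y j ω) n - θ ≤ -ε}
        = {ω | (∑ j ∈ Finset.range n, Y j) ω ≤ (n : ℝ) * (θ - ε)} := by
      ext ω
      simp only [Set.mem_setOf_eq, sampleMean, Finset.sum_apply]
      rw [sub_le_iff_le_add, div_le_iff₀ hnpos]
      constructor <;> intro h <;> nlinarith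
    rw [hset]
    have hb := measure_le_le_exp_mul_mgf (μ := P) (X := ∑ j ∈ Finset.range n, Y j)
      ((n : ℝ) * (θ - ε)) (t := -(ε / v)) (neg_nonpos_of_nonneg (by positivity)) (hint _)
    rw [hmgf, ← Real.exp_add] at hb
    have harith : - -(ε / v) * ((n : ℝ) * (θ - ε)) + n * (-(ε / v) * θ + v * (-(ε / v)) ^ 2 / 2)
        = -(n * ε ^ 2 / (2 * v)) := by field_simp; ring
    rw [harith] at hb
    calc P _ = ENNReal.ofReal
          (P {ω | (∑ j ∈ Finset.range n, Y j) ω ≤ (n : ℝ) * (θ - ε)}).toReal :=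
          (ENNReal.ofReal_toReal (measure_ne_top P _)).symm
      _ ≤ _ := ENNReal.ofReal_le_ofReal hb

lemma treeMLE0_le_xbar0 {n0 nn s : ℕ} (h0 : 1 ≤ n0) (xbar : ℕ → ℝ) :
    treeMLE0 n0 nn s xbar ≤ xbar 0 := by
  have h0' : (0 : ℝ) < n0 := by exact_mod_cast h0
  have h := Finset.inf'_le (s := (Finset.Icc 1 s).powerset)
    (f := fun I => ((n0 : ℝ) * xbar 0 + ∑ i ∈ I, (nn : ℝ) * xbar i)
      / ((n0 : ℝ) + (nn : ℝ) * I.card))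
    (Finset.mem_powerset.2 (Finset.empty_subset (Finset.Icc 1 s)))
  rw [treeMLE0]
  refine h.trans (le_of_eq ?_)
  simp only [Finset.sum_empty, Finset.card_empty, Nat.cast_zero, mul_zero, add_zero]
  rw [mul_comm, mul_div_assoc, div_self h0'.ne', mul_one]

lemma lt_treeMLE0 {n0 nn s : ℕ} (h0 : 1 ≤ n0) (hn : 1 ≤ nn) {xbar : ℕ → ℝ} {c : ℝ}
    (h : ∀ i ∈ Finset.range (s + 1), c < xbar i) : c < treeMLE0 n0 nn s xbar := by
  have h0' : (1 : ℝ) ≤ n0 := by exact_mod_cast h0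
  have hn' : (1 : ℝ) ≤ nn := by exact_mod_cast hn
  rw [treeMLE0, Finset.lt_inf'_iff]
  intro I hI
  rw [Finset.mem_powerset] at hI
  have hd : (0 : ℝ) < (n0 : ℝ) + (nn : ℝ) * I.card := by positivity
  rw [lt_div_iff₀ hd]
  have hc : c * ((n0 : ℝ) + (nn : ℝ) * I.card) = c * n0 + ∑ _i ∈ I, c * nn := by
    rw [Finset.sum_const, nsmul_eq_mul]; ring
  rw [hc]
  apply add_lt_add_of_lt_of_le
  · have h0x := h 0 (Finset.mem_range.2 (Nat.succ_pos s))
    nlinarith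
  · apply Finset.sum_le_sum
    intro i hi
    have hi' : i ∈ Finset.range (s + 1) := by
      have := Finset.mem_Icc.1 (hI hi); exact Finset.mem_range.2 (by omega)
    have := h i hi'
    nlinarith

end AuxLemmas


lemma tree_event {n0 nn s : ℕ} (h0 : 1 ≤ n0) (hn : 1 ≤ nn) {μ : ℕ → ℝ}
    (hA1 : ∀ i, 1 ≤ i → μ 0 ≤ μ i) {ε : ℝ} {xbar : ℕ → ℝ}
    (h : ε ≤ |treeMLE0 n0 nn s xbar - μ 0|) :
    (ε ≤ xbar 0 - μ 0) ∨ ∃ i ∈ Finset.range (s + 1), xbar i - μ i ≤ -ε := by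
  rcases le_abs.1 h with h' | h'
  · left
    have := treeMLE0_le_xbar0 (nn := nn) (s := s) h0 xbar
    linarith
  · by_contra hcon
    push_neg at hcon
    obtain ⟨-, h2⟩ := hcon
    have hall : ∀ i ∈ Finset.range (s + 1), μ 0 - ε < xbar i := by
      intro i hi
      have hμ : μ 0 ≤ μ i := by
        rcases Nat.eq_zero_or_pos i with rfl | hi1
        · exact le_rfl
        · exact hA1 i hi1
      have := h2 i hi
      linarith
    have := lt_treeMLE0 h0 hn hall
    linarith


/-- Under A1–A4, if `n⁽ˢ⁾ / log s → ∞` as `s → ∞`, then the constrained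
MLE `μ̂₀⁽ˢ⁾` converges in probability to `μ₀` if and only if `n₀⁽ˢ⁾ → ∞`. -/
theorem treeMLE0_consistent_iff_n0_tendsto_atTop
    {Ω : Type*} [MeasurableSpace Ω] (P : Measure Ω) [IsProbabilityMeasure P]
    (μ : ℕ → ℝ) (v : ℝ≥0) (hv : v ≠ 0)
    (n0 nn : ℕ → ℕ)
    -- A1: tree order restriction
    (hA1 : ∀ i, 1 ≤ i → μ 0 ≤ μ i)
    -- A2: uniformly bounded means
    (hA2 : ∃ B > 0, ∀ i, μ i ≤ B)
    -- A4: common treatment sample size, non-decreasing sample sizes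
    (h0pos : ∀ s, 1 ≤ n0 s) (hnpos : ∀ s, 1 ≤ nn s)
    (h0mono : Monotone n0) (hnmono : Monotone nn)
    -- A3: independent normal observations, common variance v
    (X : ℕ → ℕ → Ω → ℝ)
    (hmeas : ∀ i j, Measurable (X i j))
    (hindep : iIndepFun (fun p : ℕ × ℕ => X p.1 p.2) P)
    (hdist : ∀ i j, Measure.map (X i j) P = gaussianReal (μ i) v)
    (hlog : Tendsto (fun s : ℕ => (nn s : ℝ) / Real.log s) atTop atTop) :
    (∀ ε : ℝ, 0 < ε →
        Tendsto (fun s : ℕ =>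
            P {ω | ε ≤ |treeMLE0 (n0 s) (nn s) s (xbarVec (n0 s) (nn s) fun i j => X i j ω)
                - μ 0|})
          atTop (𝓝 0))
      ↔ Tendsto n0 atTop atTop := by
  have hvpos : (0 : ℝ) < v := by
    have h := v.2
    rcases h.lt_or_eq with h | h
    · exact h
    · exact absurd (NNReal.coe_injective (by simpa using h.symm)) hv
  have hindepi : ∀ i : ℕ, iIndepFun (fun j => X i j) P :=
    fun i => hindep.precomp' (g := fun j => ((i, j) : ℕ × ℕ))
      (fun a b h => by simpa using h)
  have hxbar : ∀ (a b : ℕ) (ω : Ω) (i : ℕ), xbarVec a b (fun i j => X i j ω) i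
      = sampleMean (fun j => X i j ω) (if i = 0 then a else b) := fun a b ω i => rfl
  constructor
  · -- consistency implies n0 → ∞
    intro htend
    by_contra hnot
    have hbdd : ∃ b, ∀ s, n0 s < b := by
      by_contra hb
      push_neg at hb
      exact hnot (tendsto_atTop_atTop_of_monotone h0mono fun b => (hb b).imp fun s hs => hs)
    obtain ⟨b, hb⟩ := hbdd
    have hfin : (Set.range n0).Finite :=
      (Set.finite_Iio b).subset (by rintro _ ⟨s, rfl⟩; exact hb s)
    obtain ⟨a, ⟨S, rfl⟩, hmax⟩ := Set.exists_max_image (Set.range n0) id hfin ⟨n0 0, 0, rfl⟩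
    have hconst : ∀ s, S ≤ s → n0 s = n0 S :=
      fun s hs => le_antisymm (hmax _ ⟨s, rfl⟩) (h0mono hs)
    set m := n0 S with hm
    set c : ℝ := μ 0 - 1 with hc
    have hsub : ∀ s, S ≤ s →
        {ω | sampleMean (fun j => X 0 j ω) m ≤ c}
          ⊆ {ω | (1 : ℝ) ≤ |treeMLE0 (n0 s) (nn s) s
              (xbarVec (n0 s) (nn s) fun i j => X i j ω) - μ 0|} := by
      intro s hs ω hω
      have h1 : treeMLE0 (n0 s) (nn s) s (xbarVec (n0 s) (nn s) fun i j => X i j ω)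
          ≤ xbarVec (n0 s) (nn s) (fun i j => X i j ω) 0 :=
        treeMLE0_le_xbar0 (h0pos s) _
      have h2 : xbarVec (n0 s) (nn s) (fun i j => X i j ω) 0
          = sampleMean (fun j => X 0 j ω) m := by
        rw [hxbar, if_pos rfl, hconst s hs]
      have hω' : sampleMean (fun j => X 0 j ω) m ≤ c := hω
      rw [Set.mem_setOf_eq, le_abs]
      right
      rw [h2] at h1
      rw [hc] at hω'
      linarith
    have hA0 : P {ω | sampleMean (fun j => X 0 j ω) m ≤ c} = 0 := by
      have hle : ∀ᶠ s in atTop, P {ω | sampleMean (fun j => X 0 j ω) m ≤ c}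
          ≤ P {ω | (1 : ℝ) ≤ |treeMLE0 (n0 s) (nn s) s
              (xbarVec (n0 s) (nn s) fun i j => X i j ω) - μ 0|} :=
        eventually_atTop.2 ⟨S, fun s hs => measure_mono (hsub s hs)⟩
      exact le_antisymm (ge_of_tendsto (htend 1 one_pos) hle) zero_le
    have hm1 : 1 ≤ m := h0pos S
    have hCsub : (⋂ j ∈ Finset.range m, X 0 j ⁻¹' Set.Iic c)
        ⊆ {ω | sampleMean (fun j => X 0 j ω) m ≤ c} := by
      intro ω hω
      simp only [Set.mem_iInter, Set.mem_preimage, Set.mem_Iic] at hω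
      show sampleMean (fun j => X 0 j ω) m ≤ c
      rw [sampleMean, div_le_iff₀ (by exact_mod_cast hm1 : (0 : ℝ) < m)]
      calc ∑ j ∈ Finset.range m, X 0 j ω ≤ ∑ _j ∈ Finset.range m, c :=
            Finset.sum_le_sum fun j hj => hω j hj
        _ = c * m := by rw [Finset.sum_const, Finset.card_range, nsmul_eq_mul, mul_comm]
    have hprod := (hindepi 0).measure_inter_preimage_eq_mul (Finset.range m)
      (sets := fun _ => Set.Iic c) (fun _ _ => measurableSet_Iic)
    have hfac : ∀ j : ℕ, P (X 0 j ⁻¹' Set.Iic c) ≠ 0 := by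
      intro j h0'
      rw [← Measure.map_apply (hmeas 0 j) measurableSet_Iic, hdist 0 j] at h0'
      have hvol := (gaussianReal_absolutelyContinuous' (μ 0) hv) h0'
      rw [Real.volume_Iic] at hvol
      exact ENNReal.top_ne_zero hvol
    have hCne : P (⋂ j ∈ Finset.range m, X 0 j ⁻¹' Set.Iic c) ≠ 0 := by
      rw [hprod]
      exact Finset.prod_ne_zero_iff.2 fun j _ => hfac j
    exact hCne (le_antisymm (hA0 ▸ measure_mono hCsub) zero_le)
  · -- n0 → ∞ implies consistency
    intro hn0top ε hε
    have hPbound : ∀ s : ℕ,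
        P {ω | ε ≤ |treeMLE0 (n0 s) (nn s) s (xbarVec (n0 s) (nn s) fun i j => X i j ω) - μ 0|}
          ≤ ENNReal.ofReal (Real.exp (-(n0 s * ε ^ 2 / (2 * v))))
            + (ENNReal.ofReal (Real.exp (-(n0 s * ε ^ 2 / (2 * v))))
              + (s : ℝ≥0∞) * ENNReal.ofReal (Real.exp (-(nn s * ε ^ 2 / (2 * v))))) := by
      intro s
      have hincl : {ω | ε ≤ |treeMLE0 (n0 s) (nn s) s
            (xbarVec (n0 s) (nn s) fun i j => X i j ω) - μ 0|}
          ⊆ {ω | ε ≤ sampleMean (fun j => X 0 j ω) (n0 s) - μ 0}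
            ∪ ⋃ i ∈ Finset.range (s + 1),
                {ω | sampleMean (fun j => X i j ω) (if i = 0 then n0 s else nn s) - μ i ≤ -ε} := by
        intro ω hω
        rcases tree_event (h0pos s) (hnpos s) hA1 hω with h' | ⟨i, hi, h'⟩
        · left
          rw [hxbar, if_pos rfl] at h'
          exact h'
        · right
          rw [hxbar] at h'
          exact Set.mem_iUnion.2 ⟨i, Set.mem_iUnion.2 ⟨hi, h'⟩⟩
      refine (measure_mono hincl).trans ((measure_union_le _ _).trans (add_le_add ?_ ?_))
      · exact (gauss_tail_bounds (hmeas 0) (hindepi 0) hv (hdist 0) (h0pos s) hε).1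
      · refine (measure_biUnion_finset_le _ _).trans ?_
        rw [Finset.sum_range_succ']
        rw [add_comm]
        refine add_le_add ?_ ?_
        · have h0' : ((if (0 : ℕ) = 0 then n0 s else nn s) : ℕ) = n0 s := if_pos rfl
          rw [h0']
          exact (gauss_tail_bounds (hmeas 0) (hindepi 0) hv (hdist 0) (h0pos s) hε).2
        · calc ∑ i ∈ Finset.range s,
                P {ω | sampleMean (fun j => X (i + 1) j ω)
                    (if i + 1 = 0 then n0 s else nn s) - μ (i + 1) ≤ -ε}
              ≤ ∑ _i ∈ Finset.range s,
                  ENNReal.ofReal (Real.exp (-(nn s * ε ^ 2 / (2 * v)))) := by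
                refine Finset.sum_le_sum fun i _ => ?_
                have hi' : ((if i + 1 = 0 then n0 s else nn s) : ℕ) = nn s :=
                  if_neg (Nat.succ_ne_zero i)
                rw [hi']
                exact (gauss_tail_bounds (hmeas (i + 1)) (hindepi (i + 1)) hv
                  (hdist (i + 1)) (hnpos s) hε).2
            _ = (s : ℝ≥0∞) * ENNReal.ofReal (Real.exp (-(nn s * ε ^ 2 / (2 * v)))) := by
                rw [Finset.sum_const, Finset.card_range, nsmul_eq_mul]
    have hexp0 : Tendsto (fun s => ENNReal.ofReal (Real.exp (-(n0 s * ε ^ 2 / (2 * v)))))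
        atTop (𝓝 0) := by
      have h1 : Tendsto (fun s => ((n0 s : ℝ))) atTop atTop :=
        tendsto_natCast_atTop_atTop.comp hn0top
      have h2 : Tendsto (fun s => -((n0 s : ℝ) * ε ^ 2 / (2 * v))) atTop atBot := by
        apply tendsto_neg_atTop_atBot.comp
        have := h1.atTop_mul_const (show (0 : ℝ) < ε ^ 2 / (2 * v) by positivity)
        simpa [mul_div_assoc] using this
      have h3 := Real.tendsto_exp_atBot.comp h2
      have h4 := ENNReal.tendsto_ofReal h3
      simpa using h4
    have hexpn : Tendsto (fun s : ℕ => (s : ℝ) * Real.exp (-(nn s * ε ^ 2 / (2 * v))))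
        atTop (𝓝 0) := by
      have hc2 : (0 : ℝ) < ε ^ 2 / (2 * v) := by positivity
      refine squeeze_zero' (Eventually.of_forall fun s => by positivity) ?_
        (tendsto_inv_atTop_zero.comp tendsto_natCast_atTop_atTop)
      filter_upwards [hlog.eventually_ge_atTop (2 / (ε ^ 2 / (2 * v)) + 1),
        eventually_ge_atTop 3] with s hs1 hs3
      have hs1' : (1 : ℝ) < s := by
        have : (3 : ℝ) ≤ s := by exact_mod_cast hs3
        linarith
      have hspos : (0 : ℝ) < s := by linarith
      have hlogpos : 0 < Real.log s := Real.log_pos hs1'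
      have h4 : (2 / (ε ^ 2 / (2 * v)) + 1) * Real.log s ≤ nn s :=
        (le_div_iff₀ hlogpos).1 hs1
      have h5 := mul_le_mul_of_nonneg_right h4 hc2.le
      have h6 : (2 / (ε ^ 2 / (2 * v))) * (ε ^ 2 / (2 * v)) = 2 :=
        div_mul_cancel₀ 2 hc2.ne'
      have hnn : 2 * Real.log s ≤ nn s * (ε ^ 2 / (2 * v)) := by nlinarith
      have hle : Real.exp (-(nn s * ε ^ 2 / (2 * v))) ≤ Real.exp (-(2 * Real.log s)) := by
        apply Real.exp_le_exp.2
        have heq : (nn s : ℝ) * ε ^ 2 / (2 * v) = (nn s : ℝ) * (ε ^ 2 / (2 * v)) := by ring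
        rw [heq]
        linarith
      have hexp2 : Real.exp (-(2 * Real.log s)) = (((s : ℝ)) ^ 2)⁻¹ := by
        rw [Real.exp_neg, two_mul, Real.exp_add, Real.exp_log hspos, sq]
      show (s : ℝ) * Real.exp (-(nn s * ε ^ 2 / (2 * v))) ≤ ((s : ℝ))⁻¹
      calc (s : ℝ) * Real.exp (-(nn s * ε ^ 2 / (2 * v)))
          ≤ (s : ℝ) * (((s : ℝ)) ^ 2)⁻¹ :=
            mul_le_mul_of_nonneg_left (hle.trans_eq hexp2) hspos.le
        _ = ((s : ℝ))⁻¹ := by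
            rw [sq, mul_inv]
            field_simp
    have hexpn' : Tendsto
        (fun s : ℕ => (s : ℝ≥0∞) * ENNReal.ofReal (Real.exp (-(nn s * ε ^ 2 / (2 * v)))))
        atTop (𝓝 0) := by
      have heq : ∀ s : ℕ, (s : ℝ≥0∞) * ENNReal.ofReal (Real.exp (-(nn s * ε ^ 2 / (2 * v))))
          = ENNReal.ofReal ((s : ℝ) * Real.exp (-(nn s * ε ^ 2 / (2 * v)))) := by
        intro s
        rw [ENNReal.ofReal_mul (by positivity), ENNReal.ofReal_natCast]
      simp_rw [heq]
      simpa using ENNReal.tendsto_ofReal hexpn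
    have hbt : Tendsto (fun s : ℕ =>
        ENNReal.ofReal (Real.exp (-(n0 s * ε ^ 2 / (2 * v))))
          + (ENNReal.ofReal (Real.exp (-(n0 s * ε ^ 2 / (2 * v))))
            + (s : ℝ≥0∞) * ENNReal.ofReal (Real.exp (-(nn s * ε ^ 2 / (2 * v))))))
        atTop (𝓝 0) := by
      have := hexp0.add (hexp0.add hexpn')
      simpa using this
    exact tendsto_of_tendsto_of_tendsto_of_le_of_le tendsto_const_nhds hbt
      (fun s => zero_le) hPbound
end
end

section
/- Consider two independent normal populations with means μ_0 ≤ μ_1 and common variance σ² > 0, where for each s the sample from population 0 has fixed size n_0 = m and the sample from population 1 has size n_1^{(s)} = m′s (m, m′ ≥ 1 fixed integers). Then as s → ∞, μ̂_0^{(s)} → min(X̄_0, μ_1) almost surely and μ̂_1^{(s)} → μ_1 almost surely. -/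
open MeasureTheory ProbabilityTheory Filter Finset BoundedContinuousFunction
open scoped NNReal Topology

noncomputable section


-- Auxiliary lemmas
lemma integrable_id_gaussianReal_zero {v : ℝ≥0} (hv : v ≠ 0) :
    Integrable id (gaussianReal 0 v) := by
  have hv' : (0:ℝ) < v := by positivity
  rw [gaussianReal_of_var_ne_zero 0 hv]
  rw [integrable_withDensity_iff (measurable_gaussianPDF 0 v)
    (Filter.Eventually.of_forall fun x => ENNReal.ofReal_lt_top)]
  have hb : (0:ℝ) < ((2:ℝ) * v)⁻¹ := by positivity
  have h1 : Integrable (fun x : ℝ => (√(2 * Real.pi * v))⁻¹ *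
      (x * Real.exp (-(((2:ℝ) * v)⁻¹) * x ^ 2))) :=
    (integrable_mul_exp_neg_mul_sq hb).const_mul _
  refine h1.congr (Filter.Eventually.of_forall fun x => ?_)
  simp only [gaussianPDF, id]
  rw [ENNReal.toReal_ofReal (gaussianPDFReal_nonneg 0 v x)]
  simp only [gaussianPDFReal, sub_zero]
  ring_nf

lemma integral_id_gaussianReal_zero {v : ℝ≥0} (hv : v ≠ 0) :
    ∫ x, x ∂(gaussianReal 0 v) = 0 := by
  have hmap : (gaussianReal 0 v).map (fun x => (-1 : ℝ) * x) = gaussianReal 0 v := by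
    have := gaussianReal_map_const_mul (μ := 0) (v := v) (-1)
    simpa using this.trans (by norm_num)
  have h := integral_map (μ := gaussianReal 0 v)
    (φ := fun x : ℝ => (-1 : ℝ) * x) (measurable_id.const_mul _).aemeasurable
    (f := fun x : ℝ => x) aestronglyMeasurable_id
  rw [hmap] at h
  have h2 : ∫ x, x ∂(gaussianReal 0 v) = - ∫ x, x ∂(gaussianReal 0 v) := by
    nth_rewrite 1 [h]
    simp only [neg_one_mul]
    exact integral_neg _
  linarith

lemma integrable_id_gaussianReal (μ : ℝ) {v : ℝ≥0} (hv : v ≠ 0) :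
    Integrable id (gaussianReal μ v) := by
  have hmap : (gaussianReal 0 v).map (· + μ) = gaussianReal μ v := by
    simpa using gaussianReal_map_add_const (μ := 0) (v := v) μ
  have hmeas : Measurable fun x : ℝ => x + μ := by fun_prop
  rw [← hmap]
  rw [integrable_map_measure aestronglyMeasurable_id
    hmeas.aemeasurable]
  exact (integrable_id_gaussianReal_zero hv).add (integrable_const μ)

lemma integral_id_gaussianReal' (μ : ℝ) {v : ℝ≥0} (hv : v ≠ 0) :
    ∫ x, x ∂(gaussianReal μ v) = μ := by
  have hmap : (gaussianReal 0 v).map (· + μ) = gaussianReal μ v := by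
    simpa using gaussianReal_map_add_const (μ := 0) (v := v) μ
  have hmeas : Measurable fun x : ℝ => x + μ := by fun_prop
  rw [← hmap, integral_map (φ := fun x : ℝ => x + μ) hmeas.aemeasurable
    (f := fun x : ℝ => x) aestronglyMeasurable_id]
  have h1 : Integrable (fun x : ℝ => x) (gaussianReal 0 v) :=
    integrable_id_gaussianReal_zero hv
  rw [integral_add h1 (integrable_const μ),
    show (∫ x : ℝ, x ∂(gaussianReal 0 v)) = 0 from integral_id_gaussianReal_zero hv]
  simp

lemma tendsto_weighted (c b : ℝ) (m : ℕ) (hm : 1 ≤ m) (a : ℕ → ℝ)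
    (ha0 : ∀ s, 0 ≤ a s) (ha : Tendsto a atTop atTop) (bs : ℕ → ℝ)
    (hb : Tendsto bs atTop (𝓝 b)) :
    Tendsto (fun s => ((m : ℝ) * c + a s * bs s) / ((m : ℝ) + a s)) atTop (𝓝 b) := by
  have hm0 : (0:ℝ) < m := by exact_mod_cast hm
  have hden : ∀ s, ((m:ℝ) + a s) ≠ 0 := fun s => by have := ha0 s; positivity
  have heq : ∀ s, ((m:ℝ) * c + a s * bs s) / ((m:ℝ) + a s)
      = bs s + (m:ℝ) * (c - bs s) * ((m:ℝ) + a s)⁻¹ := by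
    intro s
    rw [div_eq_iff (hden s), add_mul, mul_assoc, inv_mul_cancel₀ (hden s), mul_one]
    ring
  have h2 : Tendsto (fun s => ((m:ℝ) + a s)⁻¹) atTop (𝓝 0) :=
    tendsto_inv_atTop_zero.comp (tendsto_atTop_add_const_left _ _ ha)
  have h3 : Tendsto (fun s => (m:ℝ) * (c - bs s) * ((m:ℝ) + a s)⁻¹) atTop (𝓝 0) := by
    have := (((tendsto_const_nhds (x := c)).sub hb).const_mul (m:ℝ)).mul h2
    simpa using this
  have := hb.add h3
  simp only [add_zero] at this
  simpa only [heq] using this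

/-- Two independent normal populations with tree-ordered means
`μ0 ≤ μ1` and common variance `v > 0`; control sample of fixed size `m`, treatment sample
of size `m' * s`.  Then almost surely `μ̂₀⁽ˢ⁾ → min (X̄₀, μ1)` and `μ̂₁⁽ˢ⁾ → μ1` as `s → ∞`. -/
theorem mean_mle_limits_two_populations
    {Ω : Type*} [MeasurableSpace Ω] (P : Measure Ω) [IsProbabilityMeasure P]
    (μ0 μ1 : ℝ) (hμ : μ0 ≤ μ1) (v : ℝ≥0) (hv : v ≠ 0)
    (m m' : ℕ) (hm : 1 ≤ m) (hm' : 1 ≤ m')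
    (X0 X1 : ℕ → Ω → ℝ)
    (hmeas0 : ∀ j, Measurable (X0 j)) (hmeas1 : ∀ j, Measurable (X1 j))
    (hindep : iIndepFun (Sum.elim X0 X1) P)
    (hdist0 : ∀ j, Measure.map (X0 j) P = gaussianReal μ0 v)
    (hdist1 : ∀ j, Measure.map (X1 j) P = gaussianReal μ1 v) :
    ∀ᵐ ω ∂P,
      Tendsto (fun s : ℕ =>
          twoMLE0 m (m' * s) (sampleMean (fun j => X0 j ω) m)
            (sampleMean (fun j => X1 j ω) (m' * s)))
        atTop (𝓝 (min (sampleMean (fun j => X0 j ω) m) μ1)) ∧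
      Tendsto (fun s : ℕ =>
          twoMLE1 m (m' * s) (sampleMean (fun j => X0 j ω) m)
            (sampleMean (fun j => X1 j ω) (m' * s)))
        atTop (𝓝 μ1) := by
  -- integrability and mean of X1 0
  have hint : Integrable (X1 0) P := by
    have h := integrable_id_gaussianReal μ1 hv
    rw [← hdist1 0] at h
    exact (integrable_map_measure aestronglyMeasurable_id
      (hmeas1 0).aemeasurable).mp h
  have hexp : (∫ ω, X1 0 ω ∂P) = μ1 := by
    have h := integral_map (μ := P) (hmeas1 0).aemeasurable
      (f := fun x : ℝ => x) aestronglyMeasurable_id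
    rw [hdist1 0, integral_id_gaussianReal' μ1 hv] at h
    exact h.symm
  have hpair : Pairwise (Function.onFun (IndepFun · · P) X1) := fun i j hij =>
    hindep.indepFun (show (Sum.inr i : ℕ ⊕ ℕ) ≠ Sum.inr j by simpa using hij)
  have hident : ∀ i, IdentDistrib (X1 i) (X1 0) P P := fun i =>
    ⟨(hmeas1 i).aemeasurable, (hmeas1 0).aemeasurable, by rw [hdist1 i, hdist1 0]⟩
  have hslln := strong_law_ae_real X1 hint hpair hident
  filter_upwards [hslln] with ω hω
  rw [hexp] at hω
  set xb0 := sampleMean (fun j => X0 j ω) m with hxb0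
  have hms : Tendsto (fun s : ℕ => m' * s) atTop atTop :=
    tendsto_atTop_mono (fun s => Nat.le_mul_of_pos_left s hm') tendsto_id
  have hb : Tendsto (fun s : ℕ => sampleMean (fun j => X1 j ω) (m' * s))
      atTop (𝓝 μ1) := by
    exact hω.comp hms
  have ha : Tendsto (fun s : ℕ => ((m' * s : ℕ) : ℝ)) atTop atTop :=
    tendsto_natCast_atTop_atTop.comp hms
  have hw := tendsto_weighted xb0 μ1 m hm (fun s => ((m' * s : ℕ) : ℝ))
    (fun s => by positivity) ha _ hb
  have h0 : Tendsto (fun s : ℕ =>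
      twoMLE0 m (m' * s) xb0 (sampleMean (fun j => X1 j ω) (m' * s)))
      atTop (𝓝 (min xb0 μ1)) := by
    have := tendsto_const_nhds (x := xb0) (f := atTop (α := ℕ)) |>.min hw
    simpa [twoMLE0, Nat.cast_add] using this
  refine ⟨h0, ?_⟩
  have h1 := h0.max hb
  rwa [max_eq_right (min_le_right xb0 μ1)] at h1
end
end

section
/- Deterministic bound used for I₄: with equal sample sizes n_0 = n = m and s ≥ 2, for every 1 ≤ i ≤ s and any real sample means, (X̄_i^{(s)} − μ̂_i^{(s)})² ≤ (X̄_i^{(s)} − X̄_0)² · Π_{1 ≤ j ≤ s, j ≠ i} 𝟙{X̄_j^{(s)} > 2X̄_i^{(s)} − X̄_0}. -/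
open MeasureTheory ProbabilityTheory Filter Finset BoundedContinuousFunction
open scoped NNReal Topology

noncomputable section


/-- Deterministic bound used for `I₄`: with equal sample sizes
`n₀ = n = m` and `s ≥ 2`, for every `1 ≤ i ≤ s` and arbitrary real sample means,
`(X̄ᵢ − μ̂ᵢ)² ≤ (X̄ᵢ − X̄₀)² ∏_{1 ≤ j ≤ s, j ≠ i} 𝟙{X̄ⱼ > 2X̄ᵢ − X̄₀}`. -/
theorem treatment_residual_sq_bound
    (m s : ℕ) (hm : 1 ≤ m) (hs : 2 ≤ s) (xbar : ℕ → ℝ) :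
    ∀ i ∈ Finset.Icc 1 s,
      (xbar i - treeMLE m m s xbar i) ^ 2 ≤
        (xbar i - xbar 0) ^ 2 *
          ∏ j ∈ (Finset.Icc 1 s).erase i,
            (if 2 * xbar i - xbar 0 < xbar j then (1 : ℝ) else 0) := by
  intro i hi
  have hm0 : (0:ℝ) < m := by exact_mod_cast hm
  set μ0 := treeMLE0 m m s xbar with hμ0
  have hle : ∀ I ∈ (Finset.Icc 1 s).powerset,
      μ0 ≤ ((m:ℝ) * xbar 0 + ∑ k ∈ I, (m:ℝ) * xbar k) / ((m:ℝ) + (m:ℝ) * I.card) :=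
    fun I hI => Finset.inf'_le _ hI
  have h0 : μ0 ≤ xbar 0 := by
    have := hle ∅ (by simp)
    simpa [hm0.ne'] using this
  by_cases hci : μ0 ≤ xbar i
  · have hmax : treeMLE m m s xbar i = xbar i := max_eq_right hci
    rw [hmax]
    simp only [sub_self, ne_eq, OfNat.ofNat_ne_zero, not_false_eq_true, zero_pow]
    positivity
  · push_neg at hci
    have hprod : ∀ j ∈ (Finset.Icc 1 s).erase i, 2 * xbar i - xbar 0 < xbar j := by
      intro j hj
      by_contra hc
      push_neg at hc
      have hjm : ({j} : Finset ℕ) ∈ (Finset.Icc 1 s).powerset := by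
        rw [Finset.mem_powerset, Finset.singleton_subset_iff]
        exact Finset.mem_of_mem_erase hj
      have hval := hle {j} hjm
      have heq : ((m:ℝ) * xbar 0 + ∑ k ∈ ({j}:Finset ℕ), (m:ℝ) * xbar k)
          / ((m:ℝ) + (m:ℝ) * (({j}:Finset ℕ).card : ℝ)) = (xbar 0 + xbar j)/2 := by
        simp only [Finset.sum_singleton, Finset.card_singleton, Nat.cast_one, mul_one]
        field_simp
        ring
      rw [heq] at hval
      have : μ0 ≤ xbar i := hval.trans (by linarith)
      linarith
    rw [Finset.prod_congr rfl (fun j hj => if_pos (hprod j hj)), Finset.prod_const_one, mul_one]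
    have hmax : treeMLE m m s xbar i = μ0 := max_eq_left hci.le
    rw [hmax]
    nlinarith [h0, hci]
end
end
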